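/- arXiv:2604.13779 — 4 statements merged into one kernel-verified Lean document; each statement's English description precedes it below -/
import Mathlib

section
/- For the INMA(q1,q2) random field, the variance of each observation satisfies V(X_{s,t}) = μ_X + (σ_ε² − μ_ε) · ∑_{i=0}^{q1} ∑_{j=0}^{q2} β_{ij}², where μ_X = μ_ε β_•. (Proposition 1, variance.) -/
open MeasureTheory ProbabilityTheory Finset
open scoped ENNReal

/-- Fubini for independent random elements, in `ℝ≥0∞`. -/
lemma indep_lintegral_comp {Ω α γ : Type*} [MeasurableSpace Ω] [MeasurableSpace α]
    [MeasurableSpace γ] (P : Measure Ω) [IsProbabilityMeasure P] {U : Ω → α} {V : Ω → γ}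
    (hU : Measurable U) (hV : Measurable V) (hUV : IndepFun U V P)
    {g : α → γ → ℝ≥0∞} (hg : Measurable (Function.uncurry g)) :
    ∫⁻ ω, g (U ω) (V ω) ∂P = ∫⁻ a, ∫⁻ c, g a c ∂(P.map V) ∂(P.map U) := by
  have hmap := (indepFun_iff_map_prod_eq_prod_map_map hU.aemeasurable hV.aemeasurable).mp hUV
  haveI : IsProbabilityMeasure (P.map U) := Measure.isProbabilityMeasure_map hU.aemeasurable
  haveI : IsProbabilityMeasure (P.map V) := Measure.isProbabilityMeasure_map hV.aemeasurable
  have h1 : ∫⁻ ω, g (U ω) (V ω) ∂P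
      = ∫⁻ z, Function.uncurry g z ∂(P.map (fun ω => (U ω, V ω))) := by
    rw [lintegral_map hg (hU.prodMk hV)]
    rfl
  rw [h1, hmap, lintegral_prod _ hg.aemeasurable]
  rfl

lemma lintegral_nat_le_one {Ω : Type*} [MeasurableSpace Ω] (P : Measure Ω)
    {B : Ω → ℕ} (hB : Measurable B) (h1 : ∀ ω, B ω ≤ 1) :
    ∫⁻ ω, (B ω : ℝ≥0∞) ∂P = P {ω | B ω = 1} := by
  have : ∀ ω, (B ω : ℝ≥0∞) = Set.indicator (B ⁻¹' {1}) (fun _ => 1) ω := by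
    intro ω
    rcases Nat.le_one_iff_eq_zero_or_eq_one.mp (h1 ω) with h | h <;>
      simp [Set.indicator, h]
  simp_rw [this]
  rw [show (fun x : Ω => (1:ℝ≥0∞)) = (1 : Ω → ℝ≥0∞) from rfl,
    lintegral_indicator_one (hB (measurableSet_singleton 1))]
  rfl


lemma mcoe : Measurable fun n : ℕ => (n : ℝ≥0∞) := measurable_of_countable _

/-- sum-of-evals is measurable in `(E, F)`. -/
lemma hsum_meas (p1 : ℤ × ℤ) (ij : ℕ × ℕ) :
    Measurable (fun z : (((ℤ × ℤ) → ℕ) × (((ℤ × ℤ) × ℕ) → ℕ × ℕ → ℕ)) =>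
      ∑ r ∈ range (z.1 p1), z.2 (p1, r) ij) := by
  have h : Measurable (fun y : ((((ℤ × ℤ) × ℕ) → ℕ × ℕ → ℕ)) × ℕ =>
      ∑ r ∈ range y.2, y.1 (p1, r) ij) := by
    apply measurable_from_prod_countable_left
    intro n
    simp only
    apply Finset.measurable_sum
    intro r _
    exact (measurable_pi_apply ij).comp (measurable_pi_apply (p1, r))
  have h2 : Measurable (fun z : (((ℤ × ℤ) → ℕ) × (((ℤ × ℤ) × ℕ) → ℕ × ℕ → ℕ)) =>
      (z.2, z.1 p1)) := by
    exact measurable_snd.prodMk ((measurable_pi_apply p1).comp measurable_fst)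
  exact h.comp h2

section aux
variable {Ω : Type*} [MeasurableSpace Ω] (P : Measure Ω) [IsProbabilityMeasure P]
    {ε : ℤ × ℤ → Ω → ℕ} (hεmeas : ∀ p, Measurable (ε p))
    {Z : ℤ × ℤ → ℕ → Ω → ℕ × ℕ → ℕ} (hZmeas : ∀ p r, Measurable (Z p r))
    (hindep : IndepFun (fun ω p => ε p ω)
      (fun ω (pr : (ℤ × ℤ) × ℕ) => Z pr.1 pr.2 ω) P)

include hεmeas hZmeas hindep in
/-- First moment of a compound sum: reduce to a function of `ε p1`. -/
lemma compound_first (p1 : ℤ × ℤ) (ij : ℕ × ℕ) (c : ℕ → ℝ≥0∞)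
    (hc : ∀ r, ∫⁻ ω, (Z p1 r ω ij : ℝ≥0∞) ∂P = c r) :
    ∫⁻ ω, ((∑ r ∈ range (ε p1 ω), Z p1 r ω ij : ℕ) : ℝ≥0∞) ∂P
      = ∫⁻ ω, (∑ r ∈ range (ε p1 ω), c r) ∂P := by
  classical
  set U := fun ω (p : ℤ × ℤ) => ε p ω with hU
  set V := fun ω (pr : (ℤ × ℤ) × ℕ) => Z pr.1 pr.2 ω with hV
  have hUm : Measurable U := measurable_pi_lambda _ fun p => hεmeas p
  have hVm : Measurable V := measurable_pi_lambda _ fun pr => hZmeas pr.1 pr.2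
  have key := indep_lintegral_comp P hUm hVm hindep
    (g := fun E F => ((∑ r ∈ range (E p1), F (p1, r) ij : ℕ) : ℝ≥0∞))
    (mcoe.comp (hsum_meas p1 ij))
  have lhs : ∫⁻ ω, ((∑ r ∈ range (ε p1 ω), Z p1 r ω ij : ℕ) : ℝ≥0∞) ∂P
      = ∫⁻ ω, ((∑ r ∈ range (U ω p1), V ω (p1, r) ij : ℕ) : ℝ≥0∞) ∂P := rfl
  rw [lhs, key]
  have inner : ∀ E : (ℤ × ℤ) → ℕ,
      ∫⁻ F, ((∑ r ∈ range (E p1), F (p1, r) ij : ℕ) : ℝ≥0∞) ∂(P.map V)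
        = ∑ r ∈ range (E p1), c r := by
    intro E
    have hcast : ∀ F : ((ℤ × ℤ) × ℕ) → ℕ × ℕ → ℕ,
        ((∑ r ∈ range (E p1), F (p1, r) ij : ℕ) : ℝ≥0∞)
          = ∑ r ∈ range (E p1), (F (p1, r) ij : ℝ≥0∞) := fun F => by push_cast; rfl
    simp_rw [hcast]
    rw [lintegral_finset_sum _ (fun r _ =>
      show Measurable (fun F : ((ℤ × ℤ) × ℕ) → ℕ × ℕ → ℕ => (F (p1, r) ij : ℝ≥0∞)) from
        mcoe.comp ((measurable_pi_apply ij).comp (measurable_pi_apply (p1, r))))]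
    refine Finset.sum_congr rfl fun r _ => ?_
    rw [lintegral_map (show Measurable (fun F : ((ℤ × ℤ) × ℕ) → ℕ × ℕ → ℕ =>
        (F (p1, r) ij : ℝ≥0∞)) from
      mcoe.comp ((measurable_pi_apply ij).comp (measurable_pi_apply (p1, r)))) hVm]
    exact hc r
  simp_rw [inner]
  have hm : Measurable (fun E : (ℤ × ℤ) → ℕ => ∑ r ∈ range (E p1), c r) := by
    exact (measurable_of_countable (fun n : ℕ => ∑ r ∈ range n, c r)).comp
      (measurable_pi_apply p1)
  rw [lintegral_map hm hUm]

include hεmeas hZmeas hindep in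
/-- Second/cross moments of compound sums: reduce to a function of `(ε p1, ε p2)`. -/
lemma compound_second (p1 p2 : ℤ × ℤ) (ij kl : ℕ × ℕ) (c : ℕ → ℕ → ℝ≥0∞)
    (hc : ∀ r r', ∫⁻ ω, ((Z p1 r ω ij * Z p2 r' ω kl : ℕ) : ℝ≥0∞) ∂P = c r r') :
    ∫⁻ ω, (((∑ r ∈ range (ε p1 ω), Z p1 r ω ij) *
            (∑ r' ∈ range (ε p2 ω), Z p2 r' ω kl) : ℕ) : ℝ≥0∞) ∂P
      = ∫⁻ ω, (∑ r ∈ range (ε p1 ω), ∑ r' ∈ range (ε p2 ω), c r r') ∂P := by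
  classical
  set U := fun ω (p : ℤ × ℤ) => ε p ω with hU
  set V := fun ω (pr : (ℤ × ℤ) × ℕ) => Z pr.1 pr.2 ω with hV
  have hUm : Measurable U := measurable_pi_lambda _ fun p => hεmeas p
  have hVm : Measurable V := measurable_pi_lambda _ fun pr => hZmeas pr.1 pr.2
  have key := indep_lintegral_comp P hUm hVm hindep
    (g := fun E F => (((∑ r ∈ range (E p1), F (p1, r) ij) *
        (∑ r' ∈ range (E p2), F (p2, r') kl) : ℕ) : ℝ≥0∞))
    (mcoe.comp ((hsum_meas p1 ij).mul (hsum_meas p2 kl)))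
  have lhs : ∫⁻ ω, (((∑ r ∈ range (ε p1 ω), Z p1 r ω ij) *
            (∑ r' ∈ range (ε p2 ω), Z p2 r' ω kl) : ℕ) : ℝ≥0∞) ∂P
      = ∫⁻ ω, (((∑ r ∈ range (U ω p1), V ω (p1, r) ij) *
            (∑ r' ∈ range (U ω p2), V ω (p2, r') kl) : ℕ) : ℝ≥0∞) ∂P := rfl
  rw [lhs, key]
  have inner : ∀ E : (ℤ × ℤ) → ℕ,
      ∫⁻ F, (((∑ r ∈ range (E p1), F (p1, r) ij) *
          (∑ r' ∈ range (E p2), F (p2, r') kl) : ℕ) : ℝ≥0∞) ∂(P.map V)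
        = ∑ r ∈ range (E p1), ∑ r' ∈ range (E p2), c r r' := by
    intro E
    have hcast : ∀ F : ((ℤ × ℤ) × ℕ) → ℕ × ℕ → ℕ,
        (((∑ r ∈ range (E p1), F (p1, r) ij) *
          (∑ r' ∈ range (E p2), F (p2, r') kl) : ℕ) : ℝ≥0∞)
        = ∑ r ∈ range (E p1), ∑ r' ∈ range (E p2),
            ((F (p1, r) ij * F (p2, r') kl : ℕ) : ℝ≥0∞) := by
      intro F
      push_cast
      rw [Finset.sum_mul_sum]
    simp_rw [hcast]
    rw [lintegral_finset_sum _ (fun r _ =>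
      show Measurable (fun F : ((ℤ × ℤ) × ℕ) → ℕ × ℕ → ℕ =>
          ∑ r' ∈ range (E p2), ((F (p1, r) ij * F (p2, r') kl : ℕ) : ℝ≥0∞)) from
        Finset.measurable_sum _ (fun r' _ =>
          mcoe.comp (by exact (show Measurable (fun F : ((ℤ × ℤ) × ℕ) → ℕ × ℕ → ℕ => F (p1, r) ij) from (measurable_pi_apply ij).comp (measurable_pi_apply (p1, r))).mul
                                (show Measurable (fun F : ((ℤ × ℤ) × ℕ) → ℕ × ℕ → ℕ => F (p2, r') kl) from (measurable_pi_apply kl).comp (measurable_pi_apply (p2, r'))))))]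
    refine Finset.sum_congr rfl fun r _ => ?_
    rw [lintegral_finset_sum _ (fun r' _ =>
      show Measurable (fun F : ((ℤ × ℤ) × ℕ) → ℕ × ℕ → ℕ =>
          ((F (p1, r) ij * F (p2, r') kl : ℕ) : ℝ≥0∞)) from
        mcoe.comp (by exact (show Measurable (fun F : ((ℤ × ℤ) × ℕ) → ℕ × ℕ → ℕ => F (p1, r) ij) from (measurable_pi_apply ij).comp (measurable_pi_apply (p1, r))).mul
                              (show Measurable (fun F : ((ℤ × ℤ) × ℕ) → ℕ × ℕ → ℕ => F (p2, r') kl) from (measurable_pi_apply kl).comp (measurable_pi_apply (p2, r')))))]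
    refine Finset.sum_congr rfl fun r' _ => ?_
    rw [lintegral_map (show Measurable (fun F : ((ℤ × ℤ) × ℕ) → ℕ × ℕ → ℕ =>
          ((F (p1, r) ij * F (p2, r') kl : ℕ) : ℝ≥0∞)) from
        mcoe.comp (by exact (show Measurable (fun F : ((ℤ × ℤ) × ℕ) → ℕ × ℕ → ℕ => F (p1, r) ij) from (measurable_pi_apply ij).comp (measurable_pi_apply (p1, r))).mul
                              (show Measurable (fun F : ((ℤ × ℤ) × ℕ) → ℕ × ℕ → ℕ => F (p2, r') kl) from (measurable_pi_apply kl).comp (measurable_pi_apply (p2, r'))))) hVm]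
    exact hc r r'
  simp_rw [inner]
  have hm : Measurable (fun E : (ℤ × ℤ) → ℕ =>
      ∑ r ∈ range (E p1), ∑ r' ∈ range (E p2), c r r') := by
    have h2 : Measurable (fun y : ℕ × ℕ => ∑ r ∈ range y.1, ∑ r' ∈ range y.2, c r r') :=
      measurable_of_countable _
    exact h2.comp (((measurable_pi_apply p1).prodMk (measurable_pi_apply p2) :
      Measurable fun E : (ℤ × ℤ) → ℕ => (E p1, E p2)))
  rw [lintegral_map hm hUm]

end aux


/-- diagonal/off-diagonal double sum computation in `ℝ≥0∞`. -/
lemma sum_ite_calc (n : ℕ) (u v : ℝ≥0∞) (hvu : v ≤ u) :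
    ∑ r ∈ range n, ∑ r' ∈ range n, (if r = r' then u else v)
      = (n : ℝ≥0∞) * n * v + n * (u - v) := by
  have hterm : ∀ r r' : ℕ, (if r = r' then u else v) = v + (if r = r' then u - v else 0) := by
    intro r r'
    split
    · rw [add_tsub_cancel_of_le hvu]
    · rw [add_zero]
  simp_rw [hterm, Finset.sum_add_distrib, Finset.sum_ite_eq, Finset.sum_const,
    Finset.card_range, nsmul_eq_mul]
  congr 1
  · ring
  · rw [Finset.sum_congr rfl (fun r hr => if_pos hr), Finset.sum_const, Finset.card_range,
      nsmul_eq_mul]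

/-- Proposition 1 (variance). -/
theorem inma_variance
    {Ω : Type*} [MeasurableSpace Ω] (P : Measure Ω) [IsProbabilityMeasure P]
    (q1 q2 : ℕ) (hq : 1 ≤ q1 + q2)
    (β : ℕ → ℕ → ℝ)
    (hβ : ∀ i ≤ q1, ∀ j ≤ q2, β i j ∈ Set.Icc (0 : ℝ) 1)
    -- the i.i.d. innovations, with finite mean and variance
    (ε : ℤ × ℤ → Ω → ℕ) (hεmeas : ∀ p, Measurable (ε p))
    (hεiid : iIndepFun ε P)
    (hεid : ∀ p, Measure.map (ε p) P = Measure.map (ε (0, 0)) P)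
    (hεL2 : Integrable (fun ω => ((ε (0, 0) ω : ℝ)) ^ 2) P)
    (με : ℝ) (hμε : με = ∫ ω, (ε (0, 0) ω : ℝ) ∂P)
    (σε2 : ℝ) (hσε2 : σε2 = variance (fun ω => (ε (0, 0) ω : ℝ)) P)
    -- the counting-series vectors, i.i.d., with {0,1}-valued components
    (Z : ℤ × ℤ → ℕ → Ω → ℕ × ℕ → ℕ)
    (hZmeas : ∀ p r, Measurable (Z p r))
    (hZ01 : ∀ p r ω ij, Z p r ω ij ≤ 1)
    (hZiid : iIndepFun
      (fun pr : (ℤ × ℤ) × ℕ => Z pr.1 pr.2) P)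
    (hZid : ∀ p r, Measure.map (Z p r) P = Measure.map (Z (0, 0) 0) P)
    (hZβ : ∀ p r, ∀ i ≤ q1, ∀ j ≤ q2,
      P {ω | Z p r ω (i, j) = 1} = ENNReal.ofReal (β i j))
    -- the whole thinning family is independent of the innovation family
    (hindep : IndepFun (fun ω p => ε p ω)
      (fun ω (pr : (ℤ × ℤ) × ℕ) => Z pr.1 pr.2 ω) P)
    -- the INMA(q1,q2) random field
    (X : ℤ → ℤ → Ω → ℕ)
    (hX : ∀ s t ω, X s t ω =
      ∑ i ∈ range (q1 + 1), ∑ j ∈ range (q2 + 1),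
        ∑ r ∈ range (ε (s - (i : ℤ), t - (j : ℤ)) ω),
          Z (s - (i : ℤ), t - (j : ℤ)) r ω (i, j))
    (s t : ℤ) :
    variance (fun ω => (X s t ω : ℝ)) P =
      με * (∑ i ∈ range (q1 + 1), ∑ j ∈ range (q2 + 1), β i j)
        + (σε2 - με) * ∑ i ∈ range (q1 + 1), ∑ j ∈ range (q2 + 1), (β i j) ^ 2 := by
  classical
  -- notation
  set q : Finset (ℕ × ℕ) := range (q1 + 1) ×ˢ range (q2 + 1) with hqdef
  set pm : ℕ × ℕ → ℤ × ℤ := fun ij => (s - (ij.1 : ℤ), t - (ij.2 : ℤ)) with hpmdef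
  set Y : ℕ × ℕ → Ω → ℕ := fun ij ω => ∑ r ∈ range (ε (pm ij) ω), Z (pm ij) r ω ij with hYdef
  set b : ℕ × ℕ → ℝ≥0∞ := fun ij => ENNReal.ofReal (β ij.1 ij.2) with hbdef
  set M1 : ℝ≥0∞ := ∫⁻ ω, (ε (0, 0) ω : ℝ≥0∞) ∂P with hM1def
  set M2 : ℝ≥0∞ := ∫⁻ ω, ((ε (0, 0) ω : ℝ≥0∞) * (ε (0, 0) ω : ℝ≥0∞)) ∂P with hM2def
  have hmemq : ∀ ij : ℕ × ℕ, ij ∈ q → ij.1 ≤ q1 ∧ ij.2 ≤ q2 := by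
    intro ij hij
    rw [hqdef, Finset.mem_product, Finset.mem_range, Finset.mem_range] at hij
    omega
  have hβ' : ∀ ij ∈ q, 0 ≤ β ij.1 ij.2 ∧ β ij.1 ij.2 ≤ 1 := fun ij hij =>
    (hβ ij.1 (hmemq ij hij).1 ij.2 (hmemq ij hij).2 : _)
  -- X as a sum of Y over q
  have hXq : ∀ ω, X s t ω = ∑ ij ∈ q, Y ij ω := by
    intro ω
    rw [hX s t ω, hqdef, Finset.sum_product]
  -- injectivity of the site map
  have hpm_inj : ∀ ij kl : ℕ × ℕ, pm ij = pm kl → ij = kl := by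
    intro ij kl h
    rw [hpmdef] at h
    simp only [Prod.mk.injEq, sub_right_inj, Nat.cast_inj] at h
    exact Prod.ext h.1 h.2
  -- measurability of Y
  have hYmeas : ∀ ij, Measurable (Y ij) := by
    intro ij
    have h : Measurable (fun y : Ω × ℕ => ∑ r ∈ range y.2, Z (pm ij) r y.1 ij) := by
      apply measurable_from_prod_countable_left
      intro n
      simp only
      apply Finset.measurable_sum
      intro r _
      exact (measurable_pi_apply ij).comp (hZmeas (pm ij) r)
    exact h.comp (measurable_id.prodMk (hεmeas (pm ij)))
  -- the basic Bernoulli integrals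
  have hZint : ∀ (p0 : ℤ × ℤ) (r : ℕ) (ij : ℕ × ℕ), ij ∈ q →
      ∫⁻ ω, (Z p0 r ω ij : ℝ≥0∞) ∂P = b ij := by
    intro p0 r ij hij
    rw [lintegral_nat_le_one P (B := fun ω => Z p0 r ω ij)
      (by exact (measurable_pi_apply ij).comp (hZmeas p0 r)) (fun ω => hZ01 p0 r ω ij)]
    have := hZβ p0 r ij.1 (hmemq ij hij).1 ij.2 (hmemq ij hij).2
    rw [hbdef]
    simpa using this
  -- cross integrals of two Z components at distinct (site, r) indices
  have hZZ : ∀ (p0 p0' : ℤ × ℤ) (r r' : ℕ), (p0, r) ≠ (p0', r') →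
      ∀ (ij : ℕ × ℕ), ij ∈ q → ∀ (kl : ℕ × ℕ), kl ∈ q →
      ∫⁻ ω, ((Z p0 r ω ij * Z p0' r' ω kl : ℕ) : ℝ≥0∞) ∂P = b ij * b kl := by
    intro p0 p0' r r' hne ij hij kl hkl
    have hBm : Measurable (fun ω => Z p0 r ω ij) := by
      exact (measurable_pi_apply ij).comp (hZmeas p0 r)
    have hCm : Measurable (fun ω => Z p0' r' ω kl) := by
      exact (measurable_pi_apply kl).comp (hZmeas p0' r')
    rw [lintegral_nat_le_one P (B := fun ω => Z p0 r ω ij * Z p0' r' ω kl)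
      (by exact hBm.mul hCm)
      (fun ω => by have h1 := hZ01 p0 r ω ij; have h2 := hZ01 p0' r' ω kl; nlinarith)]
    have hset : {ω | Z p0 r ω ij * Z p0' r' ω kl = 1}
        = ((fun ω => Z p0 r ω ij) ⁻¹' {1}) ∩ ((fun ω => Z p0' r' ω kl) ⁻¹' {1}) := by
      ext ω
      simp only [Set.mem_setOf_eq, Set.mem_inter_iff, Set.mem_preimage, Set.mem_singleton_iff]
      constructor
      · intro h
        exact ⟨Nat.eq_one_of_mul_eq_one_right h, Nat.eq_one_of_mul_eq_one_left h⟩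
      · rintro ⟨h1, h2⟩
        rw [h1, h2]
    have hIF : IndepFun (fun ω => Z p0 r ω ij) (fun ω => Z p0' r' ω kl) P := by
      have h1 : IndepFun (Z p0 r) (Z p0' r') P := by
        have := hZiid.indepFun (i := (p0, r)) (j := (p0', r')) hne
        exact this
      exact h1.comp (measurable_pi_apply ij) (measurable_pi_apply kl)
    rw [hset, hIF.measure_inter_preimage_eq_mul _ _ (measurableSet_singleton 1)
      (measurableSet_singleton 1)]
    have e1 : (fun ω => Z p0 r ω ij) ⁻¹' {1} = {ω | Z p0 r ω ij = 1} := rfl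
    have e2 : (fun ω => Z p0' r' ω kl) ⁻¹' {1} = {ω | Z p0' r' ω kl = 1} := rfl
    rw [e1, e2]
    have hb1 := hZβ p0 r ij.1 (hmemq ij hij).1 ij.2 (hmemq ij hij).2
    have hb2 := hZβ p0' r' kl.1 (hmemq kl hkl).1 kl.2 (hmemq kl hkl).2
    rw [hbdef]
    simp only [Prod.mk.eta] at hb1 hb2 ⊢
    rw [hb1, hb2]
  -- diagonal: Z * Z = Z for 0/1-valued
  have hZZdiag : ∀ (p0 : ℤ × ℤ) (r : ℕ) (ij : ℕ × ℕ), ij ∈ q →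
      ∫⁻ ω, ((Z p0 r ω ij * Z p0 r ω ij : ℕ) : ℝ≥0∞) ∂P = b ij := by
    intro p0 r ij hij
    have : ∀ ω, Z p0 r ω ij * Z p0 r ω ij = Z p0 r ω ij := by
      intro ω
      rcases Nat.le_one_iff_eq_zero_or_eq_one.mp (hZ01 p0 r ω ij) with h | h <;> rw [h]
    simp_rw [this]
    exact hZint p0 r ij hij
  -- transfer of ε-integrals to the origin
  have htrans : ∀ (p0 : ℤ × ℤ) (f : ℕ → ℝ≥0∞),
      ∫⁻ ω, f (ε p0 ω) ∂P = ∫⁻ ω, f (ε (0, 0) ω) ∂P := by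
    intro p0 f
    rw [← lintegral_map (measurable_of_countable f) (hεmeas p0), hεid p0,
      lintegral_map (measurable_of_countable f) (hεmeas (0, 0))]
  -- first moments
  have moment1 : ∀ ij ∈ q, ∫⁻ ω, (Y ij ω : ℝ≥0∞) ∂P = b ij * M1 := by
    intro ij hij
    rw [hYdef]
    simp only
    rw [compound_first P hεmeas hZmeas hindep (pm ij) ij (fun _ => b ij)
      (fun r => hZint (pm ij) r ij hij)]
    have : ∀ ω, (∑ _r ∈ range (ε (pm ij) ω), b ij) = ((ε (pm ij) ω : ℝ≥0∞)) * b ij := by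
      intro ω
      rw [Finset.sum_const, Finset.card_range, nsmul_eq_mul]
    simp_rw [this]
    rw [htrans (pm ij) (fun n => (n : ℝ≥0∞) * b ij)]
    rw [lintegral_mul_const' _ _ (by rw [hbdef]; exact ENNReal.ofReal_ne_top), hM1def, mul_comm]
  -- b basic facts
  have hbne : ∀ ij, b ij ≠ ⊤ := by
    intro ij; rw [hbdef]; exact ENNReal.ofReal_ne_top
  have hble : ∀ ij ∈ q, b ij ≤ 1 := by
    intro ij hij; rw [hbdef]; exact ENNReal.ofReal_le_one.mpr (hβ' ij hij).2
  have hbble : ∀ ij ∈ q, b ij * b ij ≤ b ij := by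
    intro ij hij
    calc b ij * b ij ≤ 1 * b ij := mul_le_mul_left (hble ij hij) _
    _ = b ij := one_mul _
  -- second moments, diagonal
  have moment2 : ∀ ij ∈ q, ∫⁻ ω, ((Y ij ω * Y ij ω : ℕ) : ℝ≥0∞) ∂P
      = b ij * b ij * M2 + (b ij - b ij * b ij) * M1 := by
    intro ij hij
    rw [hYdef]
    simp only
    rw [compound_second P hεmeas hZmeas hindep (pm ij) (pm ij) ij ij
      (fun r r' => if r = r' then b ij else b ij * b ij)
      (fun r r' => by
        show _ = if r = r' then b ij else b ij * b ij
        by_cases h : r = r'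
        · rw [if_pos h, h]
          exact hZZdiag (pm ij) r' ij hij
        · rw [if_neg h]
          exact hZZ (pm ij) (pm ij) r r' (by simp [h]) ij hij ij hij)]
    have hsum : ∀ ω, (∑ r ∈ range (ε (pm ij) ω), ∑ r' ∈ range (ε (pm ij) ω),
        (if r = r' then b ij else b ij * b ij))
        = ((ε (pm ij) ω : ℝ≥0∞)) * (ε (pm ij) ω) * (b ij * b ij)
          + (ε (pm ij) ω) * (b ij - b ij * b ij) := by
      intro ω
      rw [sum_ite_calc (ε (pm ij) ω) (b ij) (b ij * b ij) (hbble ij hij)]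
    simp_rw [hsum]
    rw [htrans (pm ij) (fun n => (n : ℝ≥0∞) * n * (b ij * b ij) + n * (b ij - b ij * b ij))]
    rw [lintegral_add_left (by
      exact ((measurable_of_countable (fun n : ℕ => ((n : ℝ≥0∞)) * n)).comp
        (hεmeas (0, 0))).mul_const _)]
    rw [lintegral_mul_const' _ _ (by
      exact ENNReal.mul_ne_top (hbne ij) (hbne ij))]
    rw [lintegral_mul_const' _ _ (by
      exact ne_top_of_le_ne_top (hbne ij) (tsub_le_self))]
    rw [hM1def, hM2def]
    ring
  -- cross moments
  have momentcross : ∀ ij ∈ q, ∀ kl ∈ q, ij ≠ kl →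
      ∫⁻ ω, ((Y ij ω * Y kl ω : ℕ) : ℝ≥0∞) ∂P = b ij * b kl * (M1 * M1) := by
    intro ij hij kl hkl hne
    have hpne : pm ij ≠ pm kl := fun h => hne (hpm_inj ij kl h)
    rw [hYdef]
    simp only
    rw [compound_second P hεmeas hZmeas hindep (pm ij) (pm kl) ij kl
      (fun _ _ => b ij * b kl)
      (fun r r' => hZZ (pm ij) (pm kl) r r' (by simp [hpne]) ij hij kl hkl)]
    have hsum : ∀ ω, (∑ _r ∈ range (ε (pm ij) ω), ∑ _r' ∈ range (ε (pm kl) ω),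
        b ij * b kl)
        = ((ε (pm ij) ω : ℝ≥0∞)) * ((ε (pm kl) ω : ℝ≥0∞)) * (b ij * b kl) := by
      intro ω
      rw [Finset.sum_const, Finset.sum_const, Finset.card_range, Finset.card_range,
        smul_smul, nsmul_eq_mul]
      push_cast
      ring
    simp_rw [hsum]
    rw [lintegral_mul_const' _ _ (ENNReal.mul_ne_top (hbne ij) (hbne kl))]
    have hIF : IndepFun (fun ω => ((ε (pm ij) ω : ℝ≥0∞))) (fun ω => ((ε (pm kl) ω : ℝ≥0∞))) P :=
      (hεiid.indepFun hpne).comp mcoe mcoe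
    rw [show (∫⁻ a, (ε (pm ij) a : ℝ≥0∞) * (ε (pm kl) a : ℝ≥0∞) ∂P)
        = ∫⁻ ω, ((fun ω => ((ε (pm ij) ω : ℝ≥0∞))) * fun ω => ((ε (pm kl) ω : ℝ≥0∞))) ω ∂P
        from rfl]
    rw [lintegral_mul_eq_lintegral_mul_lintegral_of_indepFun
      (by exact mcoe.comp (hεmeas (pm ij))) (by exact mcoe.comp (hεmeas (pm kl))) hIF]
    rw [htrans (pm ij) (fun n => (n : ℝ≥0∞)), htrans (pm kl) (fun n => (n : ℝ≥0∞))]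
    rw [hM1def]
    ring
  -- lintegral of X
  have hXcast : ∀ ω, ((X s t ω : ℕ) : ℝ≥0∞) = ∑ ij ∈ q, ((Y ij ω : ℕ) : ℝ≥0∞) := by
    intro ω
    rw [hXq ω]
    push_cast
    rfl
  have LX1 : ∫⁻ ω, ((X s t ω : ℕ) : ℝ≥0∞) ∂P = (∑ ij ∈ q, b ij) * M1 := by
    simp_rw [hXcast]
    rw [lintegral_finset_sum _ (fun ij _ => by exact mcoe.comp (hYmeas ij))]
    rw [Finset.sum_congr rfl moment1, ← Finset.sum_mul]
  -- lintegral of X²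
  have hXXcast : ∀ ω, ((X s t ω : ℕ) : ℝ≥0∞) * ((X s t ω : ℕ) : ℝ≥0∞)
      = ∑ ij ∈ q, ∑ kl ∈ q, ((Y ij ω * Y kl ω : ℕ) : ℝ≥0∞) := by
    intro ω
    rw [hXq ω]
    push_cast
    rw [Finset.sum_mul_sum]
  have LX2 : ∫⁻ ω, (((X s t ω : ℕ) : ℝ≥0∞) * ((X s t ω : ℕ) : ℝ≥0∞)) ∂P
      = ∑ ij ∈ q, ∑ kl ∈ q, (if ij = kl then b ij * b ij * M2 + (b ij - b ij * b ij) * M1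
          else b ij * b kl * (M1 * M1)) := by
    simp_rw [hXXcast]
    rw [lintegral_finset_sum _ (fun ij _ => Finset.measurable_sum _ (fun kl _ => by
      exact mcoe.comp ((hYmeas ij).mul (hYmeas kl))))]
    refine Finset.sum_congr rfl fun ij hij => ?_
    rw [lintegral_finset_sum _ (fun kl _ => by
      exact mcoe.comp ((hYmeas ij).mul (hYmeas kl)))]
    refine Finset.sum_congr rfl fun kl hkl => ?_
    by_cases h : ij = kl
    · subst h
      rw [if_pos rfl]
      exact moment2 ij hij
    · rw [if_neg h]
      exact momentcross ij hij kl hkl h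
  -- finiteness
  have hcast2 : ∀ n : ℕ, ENNReal.ofReal ((n : ℝ) ^ 2) = (n : ℝ≥0∞) * n := by
    intro n
    rw [show ((n : ℝ)) ^ 2 = ((n * n : ℕ) : ℝ) by push_cast; ring, ENNReal.ofReal_natCast,
      Nat.cast_mul]
  have hM2fin : M2 ≠ ⊤ := by
    have hpt : ∀ ω, (ε (0, 0) ω : ℝ≥0∞) * (ε (0, 0) ω : ℝ≥0∞)
        = ‖((ε (0, 0) ω : ℝ)) ^ 2‖ₑ := by
      intro ω
      rw [Real.enorm_eq_ofReal (sq_nonneg _), hcast2]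
    rw [hM2def]
    simp_rw [hpt]
    exact hεL2.2.ne
  have hM1fin : M1 ≠ ⊤ := by
    have hle : M1 ≤ M2 + 1 := by
      rw [hM1def, hM2def]
      calc ∫⁻ ω, ((ε (0, 0) ω : ℕ) : ℝ≥0∞) ∂P
          ≤ ∫⁻ ω, ((ε (0, 0) ω : ℝ≥0∞) * (ε (0, 0) ω : ℝ≥0∞) + 1) ∂P := by
            refine lintegral_mono fun ω => ?_
            have h : (ε (0, 0) ω : ℕ) ≤ ε (0, 0) ω * ε (0, 0) ω + 1 := by nlinarith
            calc ((ε (0, 0) ω : ℕ) : ℝ≥0∞) ≤ ((ε (0, 0) ω * ε (0, 0) ω + 1 : ℕ) : ℝ≥0∞) := by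
                  exact_mod_cast h
            _ = (ε (0, 0) ω : ℝ≥0∞) * (ε (0, 0) ω : ℝ≥0∞) + 1 := by push_cast; ring
      _ = (∫⁻ ω, ((ε (0, 0) ω : ℝ≥0∞) * (ε (0, 0) ω : ℝ≥0∞)) ∂P) + 1 := by
            rw [lintegral_add_right _ measurable_const, lintegral_const, one_mul, measure_univ]
    exact ne_top_of_le_ne_top (by
      exact ENNReal.add_ne_top.mpr ⟨hM2fin, ENNReal.one_ne_top⟩) hle
  -- finiteness of the second-moment terms
  have hTfin : ∀ ij ∈ q, ∀ kl ∈ q,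
      (if ij = kl then b ij * b ij * M2 + (b ij - b ij * b ij) * M1
        else b ij * b kl * (M1 * M1)) ≠ ⊤ := by
    intro ij hij kl hkl
    split
    · exact ENNReal.add_ne_top.mpr
        ⟨ENNReal.mul_ne_top (ENNReal.mul_ne_top (hbne ij) (hbne ij)) hM2fin,
         ENNReal.mul_ne_top (ne_top_of_le_ne_top (hbne ij) tsub_le_self) hM1fin⟩
    · exact ENNReal.mul_ne_top (ENNReal.mul_ne_top (hbne ij) (hbne kl))
        (ENNReal.mul_ne_top hM1fin hM1fin)
  -- measurability of X, real casts
  have mcoeR : Measurable fun n : ℕ => (n : ℝ) := measurable_of_countable _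
  have hXm : Measurable (X s t) := by
    have hfe : X s t = fun ω => ∑ ij ∈ q, Y ij ω := funext hXq
    rw [hfe]
    exact Finset.measurable_sum _ fun ij _ => hYmeas ij
  -- integral/lintegral conversions for ℕ-valued random variables
  have hInt1 : ∀ (f : Ω → ℕ), Measurable f →
      ∫ ω, (f ω : ℝ) ∂P = (∫⁻ ω, ((f ω : ℕ) : ℝ≥0∞) ∂P).toReal := by
    intro f hf
    rw [integral_eq_lintegral_of_nonneg_ae (ae_of_all _ fun ω => by positivity)
      (by exact (mcoeR.comp hf).aestronglyMeasurable :
        AEStronglyMeasurable (fun ω => (f ω : ℝ)) P)]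
    congr 1
    refine lintegral_congr fun ω => ?_
    exact ENNReal.ofReal_natCast _
  have hInt2 : ∀ (f : Ω → ℕ), Measurable f →
      ∫ ω, ((f ω : ℝ)) ^ 2 ∂P = (∫⁻ ω, ((f ω : ℝ≥0∞) * (f ω : ℝ≥0∞)) ∂P).toReal := by
    intro f hf
    rw [integral_eq_lintegral_of_nonneg_ae (ae_of_all _ fun ω => by positivity)
      (by exact ((mcoeR.comp hf).pow_const 2).aestronglyMeasurable :
        AEStronglyMeasurable (fun ω => ((f ω : ℝ)) ^ 2) P)]
    congr 1
    refine lintegral_congr fun ω => ?_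
    exact hcast2 _
  -- MemLp facts
  have hεMem : MemLp (fun ω => (ε (0, 0) ω : ℝ)) 2 P := by
    refine (memLp_two_iff_integrable_sq
      (by exact (mcoeR.comp (hεmeas (0, 0))).aestronglyMeasurable :
        AEStronglyMeasurable (fun ω => (ε (0, 0) ω : ℝ)) P)).mpr ?_
    exact hεL2
  have hXsqInt : Integrable (fun ω => ((X s t ω : ℝ)) ^ 2) P := by
    refine ⟨by exact ((mcoeR.comp hXm).pow_const 2).aestronglyMeasurable, ?_⟩
    rw [hasFiniteIntegral_iff_ofReal (ae_of_all _ fun ω => by positivity)]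
    have hre : ∀ ω, ENNReal.ofReal ((X s t ω : ℝ) ^ 2)
        = ((X s t ω : ℝ≥0∞)) * ((X s t ω : ℝ≥0∞)) := fun ω => hcast2 _
    simp_rw [hre]
    rw [LX2, lt_top_iff_ne_top]
    rw [ENNReal.sum_ne_top]
    intro ij hij
    rw [ENNReal.sum_ne_top]
    intro kl hkl
    exact hTfin ij hij kl hkl
  have hXMem : MemLp (fun ω => (X s t ω : ℝ)) 2 P := by
    refine (memLp_two_iff_integrable_sq
      (by exact (mcoeR.comp hXm).aestronglyMeasurable :
        AEStronglyMeasurable (fun ω => (X s t ω : ℝ)) P)).mpr ?_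
    exact hXsqInt
  -- real moments
  set m1 : ℝ := M1.toReal with hm1def
  set m2 : ℝ := M2.toReal with hm2def
  have hμε' : με = m1 := by
    rw [hμε, hInt1 (ε (0, 0)) (hεmeas (0, 0)), ← hM1def, hm1def]
  have hσ : σε2 = m2 - m1 ^ 2 := by
    rw [hσε2, variance_eq_sub hεMem]
    have e1 : (∫ ω, ((fun ω => (ε (0, 0) ω : ℝ)) ^ 2) ω ∂P) = m2 := by
      have : ((fun ω => (ε (0, 0) ω : ℝ)) ^ 2) = fun ω => ((ε (0, 0) ω : ℝ)) ^ 2 := by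
        funext ω; simp [pow_two]
      rw [this, hInt2 (ε (0, 0)) (hεmeas (0, 0)), ← hM2def, hm2def]
    have e2 : (∫ ω, (ε (0, 0) ω : ℝ) ∂P) = m1 := by
      rw [hInt1 (ε (0, 0)) (hεmeas (0, 0)), ← hM1def, hm1def]
    rw [e1, e2]
  -- variance of X via lintegrals
  have hVarX : variance (fun ω => (X s t ω : ℝ)) P
      = (∑ ij ∈ q, ∑ kl ∈ q, (if ij = kl then b ij * b ij * M2 + (b ij - b ij * b ij) * M1
          else b ij * b kl * (M1 * M1))).toReal
        - ((∑ ij ∈ q, b ij) * M1).toReal ^ 2 := by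
    rw [variance_eq_sub hXMem]
    have e1 : (∫ ω, ((fun ω => (X s t ω : ℝ)) ^ 2) ω ∂P)
        = (∑ ij ∈ q, ∑ kl ∈ q, (if ij = kl then b ij * b ij * M2 + (b ij - b ij * b ij) * M1
          else b ij * b kl * (M1 * M1))).toReal := by
      have h : ((fun ω => (X s t ω : ℝ)) ^ 2) = fun ω => ((X s t ω : ℝ)) ^ 2 := by
        funext ω; simp [pow_two]
      rw [h, hInt2 (X s t) hXm, LX2]
    have e2 : (∫ ω, (X s t ω : ℝ) ∂P) = ((∑ ij ∈ q, b ij) * M1).toReal := by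
      rw [hInt1 (X s t) hXm, LX1]
    rw [e1, e2]
  -- real-valued quantities
  set Br : ℕ × ℕ → ℝ := fun ij => β ij.1 ij.2 with hBrdef
  have htb : ∀ ij ∈ q, (b ij).toReal = Br ij := by
    intro ij hij
    rw [hbdef]
    exact ENNReal.toReal_ofReal (hβ' ij hij).1
  have hTtoReal : ∀ ij ∈ q, ∀ kl ∈ q,
      (if ij = kl then b ij * b ij * M2 + (b ij - b ij * b ij) * M1
        else b ij * b kl * (M1 * M1)).toReal
      = (if ij = kl then Br ij * Br ij * m2 + (Br ij - Br ij * Br ij) * m1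
        else Br ij * Br kl * (m1 * m1)) := by
    intro ij hij kl hkl
    by_cases h : ij = kl
    · subst h
      rw [if_pos rfl, if_pos rfl,
        ENNReal.toReal_add
          (ENNReal.mul_ne_top (ENNReal.mul_ne_top (hbne ij) (hbne ij)) hM2fin)
          (ENNReal.mul_ne_top (ne_top_of_le_ne_top (hbne ij) tsub_le_self) hM1fin),
        ENNReal.toReal_mul, ENNReal.toReal_mul, ENNReal.toReal_mul,
        ENNReal.toReal_sub_of_le (hbble ij hij) (hbne ij), ENNReal.toReal_mul,
        htb ij hij, hm1def, hm2def]
    · rw [if_neg h, if_neg h, ENNReal.toReal_mul, ENNReal.toReal_mul, ENNReal.toReal_mul,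
        htb ij hij, htb kl hkl, hm1def]
  have hsum2 : (∑ ij ∈ q, ∑ kl ∈ q, (if ij = kl then b ij * b ij * M2
        + (b ij - b ij * b ij) * M1 else b ij * b kl * (M1 * M1))).toReal
      = ∑ ij ∈ q, ∑ kl ∈ q, (if ij = kl then Br ij * Br ij * m2
        + (Br ij - Br ij * Br ij) * m1 else Br ij * Br kl * (m1 * m1)) := by
    rw [ENNReal.toReal_sum (fun ij hij => ENNReal.sum_ne_top.mpr (hTfin ij hij))]
    refine Finset.sum_congr rfl fun ij hij => ?_
    rw [ENNReal.toReal_sum (hTfin ij hij)]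
    exact Finset.sum_congr rfl fun kl hkl => hTtoReal ij hij kl hkl
  have hLX1R : ((∑ ij ∈ q, b ij) * M1).toReal = (∑ ij ∈ q, Br ij) * m1 := by
    rw [ENNReal.toReal_mul, ENNReal.toReal_sum (fun ij _ => hbne ij), ← hm1def]
    congr 1
    exact Finset.sum_congr rfl htb
  -- final algebra
  have hsplit : ∀ ij ∈ q, ∀ kl ∈ q,
      (if ij = kl then Br ij * Br ij * m2 + (Br ij - Br ij * Br ij) * m1
        else Br ij * Br kl * (m1 * m1))
      = Br ij * Br kl * (m1 * m1)
        + (if ij = kl then Br ij * m1 + Br ij ^ 2 * (σε2 - m1) else 0) := by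
    intro ij hij kl hkl
    by_cases h : ij = kl
    · subst h
      rw [if_pos rfl, if_pos rfl, hσ]
      ring
    · rw [if_neg h, if_neg h]
      ring
  have hinner : ∀ ij ∈ q, (∑ kl ∈ q, (Br ij * Br kl * (m1 * m1)
      + (if ij = kl then Br ij * m1 + Br ij ^ 2 * (σε2 - m1) else 0)))
      = Br ij * (m1 * m1) * (∑ kl ∈ q, Br kl)
        + (Br ij * m1 + Br ij ^ 2 * (σε2 - m1)) := by
    intro ij hij
    rw [Finset.sum_add_distrib, Finset.sum_ite_eq, if_pos hij]
    congr 1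
    rw [Finset.mul_sum]
    exact Finset.sum_congr rfl fun kl _ => by ring
  have hdouble : (∑ ij ∈ q, ∑ kl ∈ q, (if ij = kl then Br ij * Br ij * m2
        + (Br ij - Br ij * Br ij) * m1 else Br ij * Br kl * (m1 * m1)))
      = (∑ ij ∈ q, Br ij) * (∑ ij ∈ q, Br ij) * (m1 * m1)
        + ((∑ ij ∈ q, Br ij) * m1 + (∑ ij ∈ q, Br ij ^ 2) * (σε2 - m1)) := by
    rw [Finset.sum_congr rfl (fun ij hij =>
      (Finset.sum_congr rfl (fun kl hkl => hsplit ij hij kl hkl)).trans (hinner ij hij))]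
    rw [Finset.sum_add_distrib, Finset.sum_add_distrib]
    have h1 : (∑ ij ∈ q, Br ij * (m1 * m1) * (∑ kl ∈ q, Br kl))
        = (∑ ij ∈ q, Br ij) * (∑ ij ∈ q, Br ij) * (m1 * m1) := by
      rw [← Finset.sum_mul, ← Finset.sum_mul]
      ring
    have h2 : (∑ ij ∈ q, Br ij * m1) = (∑ ij ∈ q, Br ij) * m1 := by
      rw [← Finset.sum_mul]
    have h3 : (∑ ij ∈ q, Br ij ^ 2 * (σε2 - m1)) = (∑ ij ∈ q, Br ij ^ 2) * (σε2 - m1) := by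
      rw [← Finset.sum_mul]
    rw [h1, h2, h3]
  -- convert goal sums to sums over q
  have hg1 : (∑ i ∈ range (q1 + 1), ∑ j ∈ range (q2 + 1), β i j) = ∑ ij ∈ q, Br ij := by
    rw [hqdef, Finset.sum_product]
  have hg2 : (∑ i ∈ range (q1 + 1), ∑ j ∈ range (q2 + 1), (β i j) ^ 2)
      = ∑ ij ∈ q, Br ij ^ 2 := by
    rw [hqdef, Finset.sum_product]
  rw [hVarX, hsum2, hLX1R, hdouble, hg1, hg2, hμε']
  ring
end

section
/- For the INMA(q1,q2) random field and every u ∈ [0,1], the probability generating function of X_{s,t} factorizes as E[u^{X_{s,t}}] = ∏_{i=0}^{q1} ∏_{j=0}^{q2} pgf_ε(1 + β_{ij}(u − 1)), where pgf_ε(v) = E[v^{ε_{0,0}}]. (Proposition 1, pgf.) -/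
set_option maxHeartbeats 2000000

open MeasureTheory ProbabilityTheory Finset

/-- Expectation of a finite product of jointly independent real random variables. -/
theorem my_integral_finset_prod_of_iIndep {Ω ι : Type*} [MeasurableSpace Ω]
    {P : Measure Ω} [IsProbabilityMeasure P] {f : ι → Ω → ℝ}
    (hind : iIndepFun f P) (hmeas : ∀ i, Measurable (f i))
    (T : Finset ι) : ∫ ω, ∏ i ∈ T, f i ω ∂P = ∏ i ∈ T, ∫ ω, f i ω ∂P := by
  classical
  induction T using Finset.induction_on with
  | empty => simp
  | @insert i T hi ih =>
    have hIndep : IndepFun (f i) (∏ j ∈ T, f j) P :=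
      (hind.indepFun_finsetProd_of_notMem hmeas hi).symm
    have hprodmeas : Measurable (∏ j ∈ T, f j) := by
      apply Finset.prod_induction _ Measurable
      · exact fun g h hg hh => hg.mul hh
      · exact measurable_const
      · exact fun j _ => hmeas j
    have hmul := hIndep.integral_mul_eq_mul_integral (hmeas i).aestronglyMeasurable
      hprodmeas.aestronglyMeasurable
    have heq : ∫ ω, ∏ j ∈ insert i T, f j ω ∂P = ∫ ω, f i ω * (∏ j ∈ T, f j) ω ∂P := by
      refine integral_congr_ae (Filter.Eventually.of_forall fun ω => ?_)
      simp [Finset.prod_insert hi]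
    rw [heq, Finset.prod_insert hi, ← ih]
    calc ∫ ω, f i ω * (∏ j ∈ T, f j) ω ∂P
        = ∫ ω, (f i * ∏ j ∈ T, f j) ω ∂P := by rfl
      _ = (∫ ω, f i ω ∂P) * ∫ ω, (∏ j ∈ T, f j) ω ∂P := hmul
      _ = (∫ ω, f i ω ∂P) * ∫ ω, ∏ j ∈ T, f j ω ∂P := by
          congr 1
          exact integral_congr_ae (Filter.Eventually.of_forall fun ω => by simp)

/-- tsum/product exchange for pi types over `Fin n`. -/
theorem my_pi_tsum_prod_fin : ∀ (n : ℕ) (b : Fin n → ℕ → ℝ), (∀ i m, 0 ≤ b i m) →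
    (∀ i, Summable (b i)) →
    Summable (fun v : Fin n → ℕ => ∏ i, b i (v i)) ∧
      ∑' v : Fin n → ℕ, ∏ i, b i (v i) = ∏ i, ∑' m, b i m := by
  intro n
  induction n with
  | zero =>
    intro b _ _
    have hone : ∀ v : Fin 0 → ℕ, (∏ i, b i (v i)) = 1 := fun v => by simp
    constructor
    · exact (summable_congr hone).mpr (by exact Summable.of_finite)
    · rw [tsum_congr hone]; simp
  | succ n ih =>
    intro b hb0 hbs
    have ih' := ih (fun i => b i.succ) (fun i m => hb0 i.succ m) (fun i => hbs i.succ)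
    obtain ⟨g, hgdef⟩ : ∃ g : (Fin n → ℕ) → ℝ, g = fun v => ∏ i, b i.succ (v i) := ⟨_, rfl⟩
    obtain ⟨f, hfdef⟩ : ∃ f : ℕ → ℝ, f = b 0 := ⟨_, rfl⟩
    have ihS : Summable g := hgdef ▸ ih'.1
    have ihE : ∑' v : Fin n → ℕ, g v = ∏ i : Fin n, ∑' m, b i.succ m := by
      rw [hgdef]; exact ih'.2
    have hfS : Summable f := hfdef ▸ hbs 0
    have hf0 : (0 : ℕ → ℝ) ≤ f := fun m => hfdef ▸ hb0 0 m
    have hg0 : (0 : (Fin n → ℕ) → ℝ) ≤ g := fun v => by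
      rw [hgdef]; exact Finset.prod_nonneg fun i _ => hb0 _ _
    have hmul : Summable (fun x : ℕ × (Fin n → ℕ) => f x.1 * g x.2) :=
      Summable.mul_of_nonneg hfS ihS hf0 hg0
    let e : (Fin (n+1) → ℕ) ≃ ℕ × (Fin n → ℕ) :=
      { toFun := fun v => (v 0, fun i => v i.succ)
        invFun := fun x => Fin.cons x.1 x.2
        left_inv := fun v => by
          funext i
          refine Fin.cases ?_ ?_ i <;> simp
        right_inv := fun x => by simp }
    have hval : ∀ v : Fin (n+1) → ℕ, (∏ i, b i (v i)) = f (e v).1 * g (e v).2 := by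
      intro v
      rw [Fin.prod_univ_succ, hfdef, hgdef]
      rfl
    have hsum2 : Summable (fun v : Fin (n+1) → ℕ => ∏ i, b i (v i)) := by
      have h2 : Summable ((fun x : ℕ × (Fin n → ℕ) => f x.1 * g x.2) ∘ e) :=
        (Equiv.summable_iff e).mpr hmul
      exact h2.congr fun v => (hval v).symm
    refine ⟨hsum2, ?_⟩
    calc ∑' v : Fin (n+1) → ℕ, ∏ i, b i (v i)
        = ∑' x : ℕ × (Fin n → ℕ), f x.1 * g x.2 := by
          rw [← e.tsum_eq (fun x : ℕ × (Fin n → ℕ) => f x.1 * g x.2)]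
          exact tsum_congr fun v => hval v
      _ = (∑' m, f m) * ∑' w : Fin n → ℕ, g w := (Summable.tsum_mul_tsum hfS ihS hmul).symm
      _ = ∏ i, ∑' m, b i m := by
          rw [ihE, hfdef, ← Fin.prod_univ_succ (fun i => ∑' m, b i m)]

/-- tsum/product exchange for pi types over a fintype. -/
theorem my_pi_tsum_prod {κ : Type*} [Fintype κ] (b : κ → ℕ → ℝ)
    (hb0 : ∀ k m, 0 ≤ b k m) (hbs : ∀ k, Summable (b k)) :
    ∑' n : κ → ℕ, ∏ k, b k (n k) = ∏ k, ∑' m, b k m := by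
  classical
  obtain ⟨N, ⟨eκ⟩⟩ : ∃ N, Nonempty (κ ≃ Fin N) := ⟨Fintype.card κ, ⟨Fintype.equivFin κ⟩⟩
  set b' : Fin N → ℕ → ℝ := fun i => b (eκ.symm i) with hb'
  have h := my_pi_tsum_prod_fin N b' (fun i m => hb0 _ _) (fun i => hbs _)
  let Φ : (κ → ℕ) ≃ (Fin N → ℕ) := Equiv.arrowCongr eκ (Equiv.refl ℕ)
  have key : ∀ w : Fin N → ℕ, (∏ k, b k ((Φ.symm w) k)) = ∏ i, b' i (w i) := by
    intro w
    have h1 : ∀ k, b k ((Φ.symm w) k) = (fun i => b' i (w i)) (eκ k) := by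
      intro k
      simp [hb', Φ, Equiv.arrowCongr]
    rw [Finset.prod_congr rfl fun k _ => h1 k]
    exact Equiv.prod_comp eκ (fun i => b' i (w i))
  calc ∑' n : κ → ℕ, ∏ k, b k (n k)
      = ∑' w : Fin N → ℕ, ∏ k, b k ((Φ.symm w) k) := by
        rw [Φ.symm.tsum_eq (fun n : κ → ℕ => ∏ k, b k (n k))]
    _ = ∑' w : Fin N → ℕ, ∏ i, b' i (w i) := tsum_congr key
    _ = ∏ i, ∑' m, b' i m := h.2
    _ = ∏ k, ∑' m, b k m := Equiv.prod_comp eκ.symm (fun k => ∑' m, b k m)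

/-- A random finite sum is measurable. -/
theorem my_measurable_randomSum {Ω : Type*} [MeasurableSpace Ω]
    (N : Ω → ℕ) (hN : Measurable N) (g : ℕ → Ω → ℕ) (hg : ∀ r, Measurable (g r)) :
    Measurable (fun ω => ∑ r ∈ range (N ω), g r ω) := by
  apply measurable_to_countable'
  intro m
  have hset : (fun ω => ∑ r ∈ range (N ω), g r ω) ⁻¹' {m} =
      ⋃ n, ({ω | N ω = n} ∩ {ω | (∑ r ∈ range n, g r ω) = m}) := by
    ext ω
    constructor
    · intro h
      exact Set.mem_iUnion.mpr ⟨N ω, rfl, h⟩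
    · rintro h
      obtain ⟨n, hn1, hn2⟩ := Set.mem_iUnion.mp h
      simp only [Set.mem_setOf_eq] at hn1 hn2 ⊢
      rw [Set.mem_preimage, Set.mem_singleton_iff, hn1, hn2]
  rw [hset]
  refine MeasurableSet.iUnion fun n => MeasurableSet.inter ?_ ?_
  · exact hN (measurableSet_singleton n)
  · exact (Finset.measurable_sum (range n) fun r _ => hg r) (measurableSet_singleton m)


open MeasureTheory ProbabilityTheory Finset

/-- Proposition 1 (pgf). -/
theorem inma_pgf
    {Ω : Type*} [MeasurableSpace Ω] (P : Measure Ω) [IsProbabilityMeasure P]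
    (q1 q2 : ℕ) (hq : 1 ≤ q1 + q2)
    (β : ℕ → ℕ → ℝ)
    (hβ : ∀ i ≤ q1, ∀ j ≤ q2, β i j ∈ Set.Icc (0 : ℝ) 1)
    -- the i.i.d. innovations, with finite mean and variance
    (ε : ℤ × ℤ → Ω → ℕ) (hεmeas : ∀ p, Measurable (ε p))
    (hεiid : iIndepFun ε P)
    (hεid : ∀ p, Measure.map (ε p) P = Measure.map (ε (0, 0)) P)
    (hεL2 : Integrable (fun ω => ((ε (0, 0) ω : ℝ)) ^ 2) P)
    (με : ℝ) (hμε : με = ∫ ω, (ε (0, 0) ω : ℝ) ∂P)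
    (σε2 : ℝ) (hσε2 : σε2 = variance (fun ω => (ε (0, 0) ω : ℝ)) P)
    -- the counting-series vectors, i.i.d., with {0,1}-valued components
    (Z : ℤ × ℤ → ℕ → Ω → ℕ × ℕ → ℕ)
    (hZmeas : ∀ p r, Measurable (Z p r))
    (hZ01 : ∀ p r ω ij, Z p r ω ij ≤ 1)
    (hZiid : iIndepFun
      (fun pr : (ℤ × ℤ) × ℕ => Z pr.1 pr.2) P)
    (hZid : ∀ p r, Measure.map (Z p r) P = Measure.map (Z (0, 0) 0) P)
    (hZβ : ∀ p r, ∀ i ≤ q1, ∀ j ≤ q2,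
      P {ω | Z p r ω (i, j) = 1} = ENNReal.ofReal (β i j))
    -- the whole thinning family is independent of the innovation family
    (hindep : IndepFun (fun ω p => ε p ω)
      (fun ω (pr : (ℤ × ℤ) × ℕ) => Z pr.1 pr.2 ω) P)
    -- the INMA(q1,q2) random field
    (X : ℤ → ℤ → Ω → ℕ)
    (hX : ∀ s t ω, X s t ω =
      ∑ i ∈ range (q1 + 1), ∑ j ∈ range (q2 + 1),
        ∑ r ∈ range (ε (s - (i : ℤ), t - (j : ℤ)) ω),
          Z (s - (i : ℤ), t - (j : ℤ)) r ω (i, j))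
    (s t : ℤ) :
    ∀ u ∈ Set.Icc (0 : ℝ) 1,
      ∫ ω, u ^ X s t ω ∂P =
        ∏ i ∈ range (q1 + 1), ∏ j ∈ range (q2 + 1),
          ∫ ω, (1 + β i j * (u - 1)) ^ ε (0, 0) ω ∂P := by
  classical
  intro u hu
  obtain ⟨hu0, hu1⟩ := hu
  -- abbreviations
  set p : Fin (q1+1) × Fin (q2+1) → ℤ × ℤ :=
    fun k => (s - ((k.1 : ℕ) : ℤ), t - ((k.2 : ℕ) : ℤ)) with hpdef
  have hpinj : Function.Injective p := by
    intro k k' h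
    rw [hpdef] at h
    simp only [Prod.mk.injEq] at h
    have h1 : ((k.1 : ℕ) : ℤ) = ((k'.1 : ℕ) : ℤ) := by omega
    have h2 : ((k.2 : ℕ) : ℤ) = ((k'.2 : ℕ) : ℤ) := by omega
    have h1' : (k.1 : ℕ) = (k'.1 : ℕ) := by exact_mod_cast h1
    have h2' : (k.2 : ℕ) = (k'.2 : ℕ) := by exact_mod_cast h2
    exact Prod.ext (Fin.ext h1') (Fin.ext h2')
  set c : ℤ × ℤ → ℕ × ℕ := fun q => ((s - q.1).toNat, (t - q.2).toNat) with hcdef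
  have hc' : ∀ i j : ℕ, c (s - (i : ℤ), t - (j : ℤ)) = (i, j) := by
    intro i j
    rw [hcdef]
    simp [sub_sub_cancel]
  have hc : ∀ k : Fin (q1+1) × Fin (q2+1), c (p k) = ((k.1 : ℕ), (k.2 : ℕ)) := by
    intro k
    rw [hpdef]
    exact hc' _ _
  set a : Fin (q1+1) × Fin (q2+1) → ℝ := fun k => 1 + β k.1 k.2 * (u - 1) with hadef
  have hβmem : ∀ k : Fin (q1+1) × Fin (q2+1), β k.1 k.2 ∈ Set.Icc (0:ℝ) 1 :=
    fun k => hβ k.1 (Nat.lt_succ_iff.mp k.1.isLt) k.2 (Nat.lt_succ_iff.mp k.2.isLt)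
  have ha0 : ∀ k, 0 ≤ a k := by
    intro k
    have h := hβmem k
    show (0:ℝ) ≤ 1 + β k.1 k.2 * (u - 1)
    nlinarith [h.1, h.2, mul_nonneg (sub_nonneg.mpr h.2) (sub_nonneg.mpr hu1)]
  have ha1 : ∀ k, a k ≤ 1 := by
    intro k
    have h := hβmem k
    show (1:ℝ) + β k.1 k.2 * (u - 1) ≤ 1
    nlinarith [mul_nonneg h.1 (sub_nonneg.mpr hu1)]
  -- the elementary thinning factors
  set W : (ℤ × ℤ) × ℕ → Ω → ℝ := fun q ω => u ^ (Z q.1 q.2 ω (c q.1)) with hWdef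
  have hWmeas : ∀ q, Measurable (W q) := by
    intro q
    exact (measurable_from_top (f := fun n : ℕ => (u:ℝ) ^ n)).comp
      ((measurable_pi_apply (c q.1)).comp (hZmeas q.1 q.2))
  have hWind : iIndepFun W P := by
    have h := hZiid.comp (fun q (z : ℕ × ℕ → ℕ) => (u:ℝ) ^ (z (c q.1)))
      (fun q => (measurable_from_top (f := fun n : ℕ => (u:ℝ) ^ n)).comp
        (measurable_pi_apply (c q.1)))
    exact h
  have hWrange : ∀ q ω, W q ω ∈ Set.Icc (0:ℝ) 1 := by
    intro q ω
    exact ⟨pow_nonneg hu0 _, pow_le_one₀ hu0 hu1⟩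
  -- integrability of bounded measurable functions
  have hint : ∀ (f : Ω → ℝ), Measurable f → (∀ ω, f ω ∈ Set.Icc (0:ℝ) 1) → Integrable f P := by
    intro f hm hb
    refine (integrable_const (1:ℝ)).mono' hm.aestronglyMeasurable
      (Filter.Eventually.of_forall fun ω => ?_)
    rw [Real.norm_eq_abs, abs_le]
    exact ⟨by linarith [(hb ω).1], (hb ω).2⟩
  -- expectation of a single thinning factor
  have hWint : ∀ (k : Fin (q1+1) × Fin (q2+1)) (r : ℕ),
      ∫ ω, W (p k, r) ω ∂P = a k := by
    intro k r
    have hz : ∀ ω, Z (p k) r ω ((k.1:ℕ), (k.2:ℕ)) = 0 ∨ Z (p k) r ω ((k.1:ℕ),(k.2:ℕ)) = 1 :=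
      fun ω => Nat.le_one_iff_eq_zero_or_eq_one.mp (hZ01 _ _ _ _)
    set B : Set Ω := {ω | Z (p k) r ω ((k.1:ℕ),(k.2:ℕ)) = 1} with hBdef
    have hBmeas : MeasurableSet B := by
      have hBeq : B = (fun ω => Z (p k) r ω ((k.1:ℕ),(k.2:ℕ))) ⁻¹' {1} := rfl
      rw [hBeq]
      exact ((measurable_pi_apply _).comp (hZmeas _ _)) (measurableSet_singleton 1)
    have hWeq : ∀ ω, W (p k, r) ω = Set.indicator B (fun _ => u - 1) ω + 1 := by
      intro ω
      show (u:ℝ) ^ (Z (p k) r ω (c (p k))) = _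
      rw [hc k]
      rcases hz ω with h|h
      · have hB : ω ∉ B := by
          rw [hBdef]
          simp only [Set.mem_setOf_eq, h]
          omega
        rw [Set.indicator_of_notMem hB, h]
        simp
      · have hB : ω ∈ B := h
        rw [Set.indicator_of_mem hB, h]
        simp
    have hPB : P B = ENNReal.ofReal (β k.1 k.2) :=
      hZβ (p k) r k.1 (Nat.lt_succ_iff.mp k.1.isLt) k.2 (Nat.lt_succ_iff.mp k.2.isLt)
    rw [integral_congr_ae (Filter.Eventually.of_forall hWeq),
      integral_add ((integrable_const (u-1)).indicator hBmeas) (integrable_const 1),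
      integral_indicator_const (u-1) hBmeas, integral_const, measureReal_def, hPB,
      ENNReal.toReal_ofReal (hβmem k).1]
    simp only [measureReal_def, measure_univ, ENNReal.toReal_one, smul_eq_mul, one_mul]
    show β k.1 k.2 * (u - 1) + 1 = 1 + β k.1 k.2 * (u - 1)
    ring
  -- the partition random vector
  set V : Ω → (Fin (q1+1) × Fin (q2+1) → ℕ) := fun ω k => ε (p k) ω with hVdef
  have hVmeas : Measurable V := measurable_pi_lambda _ fun k => hεmeas _
  set A : (Fin (q1+1) × Fin (q2+1) → ℕ) → Set Ω := fun n => V ⁻¹' {n} with hAdef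
  have hAm : ∀ n, MeasurableSet (A n) := fun n => hVmeas (measurableSet_singleton n)
  have hAmem : ∀ n ω, ω ∈ A n ↔ (∀ k, ε (p k) ω = n k) := by
    intro n ω
    rw [hAdef]
    constructor
    · intro h k
      exact congrFun h k
    · intro h
      exact funext h
  have hAdisj : Pairwise (Function.onFun Disjoint A) := by
    intro n n' hne
    refine Set.disjoint_left.mpr fun ω h1 h2 => hne ?_
    rw [hAdef] at h1 h2
    exact h1.symm.trans h2
  have hAunion : (⋃ n, A n) = Set.univ := by
    ext ω
    simp only [Set.mem_iUnion, Set.mem_univ, iff_true]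
    exact ⟨V ω, rfl⟩
  -- measurability of X s t
  have hXmeas : Measurable (X s t) := by
    have hfeq : X s t = fun ω => ∑ i ∈ range (q1 + 1), ∑ j ∈ range (q2 + 1),
        ∑ r ∈ range (ε (s - (i : ℤ), t - (j : ℤ)) ω),
          Z (s - (i : ℤ), t - (j : ℤ)) r ω (i, j) := funext (hX s t)
    rw [hfeq]
    refine Finset.measurable_sum _ fun i _ => ?_
    refine Finset.measurable_sum _ fun j _ => ?_
    exact my_measurable_randomSum _ (hεmeas _) _
      (fun r => (measurable_pi_apply (i, j)).comp (hZmeas _ r))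
  have hUXmeas : Measurable (fun ω => (u:ℝ) ^ X s t ω) :=
    (measurable_from_top (f := fun n : ℕ => (u:ℝ) ^ n)).comp hXmeas
  have hUXrange : ∀ ω, (u:ℝ) ^ X s t ω ∈ Set.Icc (0:ℝ) 1 :=
    fun ω => ⟨pow_nonneg hu0 _, pow_le_one₀ hu0 hu1⟩
  -- pointwise product formula
  have hWX : ∀ ω, (u:ℝ) ^ X s t ω =
      ∏ k : Fin (q1+1) × Fin (q2+1), ∏ r ∈ range (ε (p k) ω), W (p k, r) ω := by
    intro ω
    have hpow : ∀ (s' : Finset ℕ) (f : ℕ → ℕ),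
        (u:ℝ) ^ (∑ i ∈ s', f i) = ∏ i ∈ s', (u:ℝ) ^ f i :=
      fun s' f => (Finset.prod_pow_eq_pow_sum s' f u).symm
    have hswap : ∀ (F : ℕ → ℕ → ℝ),
        (∏ k : Fin (q1+1) × Fin (q2+1), F k.1 k.2) =
          ∏ i ∈ range (q1+1), ∏ j ∈ range (q2+1), F i j := by
      intro F
      rw [Fintype.prod_prod_type' (f := fun (k1 : Fin (q1+1)) (k2 : Fin (q2+1)) =>
        F (k1 : ℕ) (k2 : ℕ))]
      calc ∏ k1 : Fin (q1+1), ∏ k2 : Fin (q2+1), F (k1:ℕ) (k2:ℕ)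
          = ∏ k1 : Fin (q1+1), ∏ j ∈ range (q2+1), F (k1:ℕ) j :=
            Finset.prod_congr rfl fun k1 _ =>
              Fin.prod_univ_eq_prod_range (fun j => F (k1:ℕ) j) (q2+1)
        _ = ∏ i ∈ range (q1+1), ∏ j ∈ range (q2+1), F i j :=
            Fin.prod_univ_eq_prod_range
              (fun i => ∏ j ∈ range (q2+1), F i j) (q1+1)
    rw [hX s t ω, hpow]
    calc ∏ i ∈ range (q1+1),
          (u:ℝ) ^ (∑ j ∈ range (q2+1), ∑ r ∈ range (ε (s - (i:ℤ), t - (j:ℤ)) ω),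
            Z (s - (i:ℤ), t - (j:ℤ)) r ω (i, j))
        = ∏ i ∈ range (q1+1), ∏ j ∈ range (q2+1),
            ∏ r ∈ range (ε (s - (i:ℤ), t - (j:ℤ)) ω),
              (u:ℝ) ^ Z (s - (i:ℤ), t - (j:ℤ)) r ω (i, j) := by
          refine Finset.prod_congr rfl fun i _ => ?_
          rw [hpow]
          exact Finset.prod_congr rfl fun j _ => hpow _ _
      _ = ∏ k : Fin (q1+1) × Fin (q2+1),
            ∏ r ∈ range (ε (s - ((k.1:ℕ):ℤ), t - ((k.2:ℕ):ℤ)) ω),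
              (u:ℝ) ^ Z (s - ((k.1:ℕ):ℤ), t - ((k.2:ℕ):ℤ)) r ω ((k.1:ℕ), (k.2:ℕ)) :=
          (hswap (fun i j => ∏ r ∈ range (ε (s - (i:ℤ), t - (j:ℤ)) ω),
            (u:ℝ) ^ Z (s - (i:ℤ), t - (j:ℤ)) r ω (i, j))).symm
      _ = ∏ k : Fin (q1+1) × Fin (q2+1), ∏ r ∈ range (ε (p k) ω), W (p k, r) ω := by
          refine Finset.prod_congr rfl fun k _ => ?_
          simp only [hWdef, hpdef, hc']
  -- per-piece integral
  have hG : ∀ n : (Fin (q1+1) × Fin (q2+1) → ℕ),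
      ∫ ω in A n, (u:ℝ) ^ X s t ω ∂P = (P (A n)).toReal * ∏ k, a k ^ n k := by
    intro n
    set G : Ω → ℝ := fun ω => ∏ k, ∏ r ∈ range (n k), W (p k, r) ω with hGdef
    have hGmeas : Measurable G := by
      rw [hGdef]
      exact Finset.measurable_prod _ fun k _ =>
        Finset.measurable_prod _ fun r _ => hWmeas _
    have step1 : Set.EqOn (fun ω => (u:ℝ) ^ X s t ω) G (A n) := by
      intro ω hω
      show (u:ℝ) ^ X s t ω = G ω
      rw [hWX ω, hGdef]
      exact Finset.prod_congr rfl fun k _ => by rw [(hAmem n ω).mp hω k]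
    rw [setIntegral_congr_fun (hAm n) step1]
    have hind_eq : ∫ ω in A n, G ω ∂P =
        ∫ ω, Set.indicator (A n) (fun _ => (1:ℝ)) ω * G ω ∂P := by
      rw [← integral_indicator (hAm n)]
      refine integral_congr_ae (Filter.Eventually.of_forall fun ω => ?_)
      by_cases h : ω ∈ A n
      · simp [Set.indicator_apply, h]
      · simp [Set.indicator_apply, h]
    rw [hind_eq]
    set φ : (ℤ × ℤ → ℕ) → ℝ :=
      Set.indicator {g : ℤ × ℤ → ℕ | ∀ k, g (p k) = n k} (fun _ => 1) with hφdef
    set ψ : ((ℤ × ℤ) × ℕ → (ℕ × ℕ → ℕ)) → ℝ :=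
      fun h => ∏ k, ∏ r ∈ range (n k), (u:ℝ) ^ (h (p k, r) (c (p k))) with hψdef
    have hφm : Measurable φ := by
      rw [hφdef]
      refine Measurable.indicator measurable_const ?_
      have hseteq : {g : ℤ × ℤ → ℕ | ∀ k, g (p k) = n k} =
          ⋂ k, (fun g : ℤ × ℤ → ℕ => g (p k)) ⁻¹' {n k} := by
        ext g
        simp
      rw [hseteq]
      exact MeasurableSet.iInter fun k =>
        (measurable_pi_apply (p k)) (measurableSet_singleton (n k))
    have hψm : Measurable ψ := by
      rw [hψdef]
      refine Finset.measurable_prod _ fun k _ =>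
        Finset.measurable_prod _ fun r _ => ?_
      exact (measurable_from_top (f := fun m : ℕ => (u:ℝ) ^ m)).comp
        ((measurable_pi_apply (c (p k))).comp (measurable_pi_apply (p k, r)))
    have hIndep0 := hindep.comp hφm hψm
    have heqφ : (φ ∘ fun ω (q : ℤ × ℤ) => ε q ω) =
        Set.indicator (A n) (fun _ => (1:ℝ)) := by
      funext ω
      by_cases h : ω ∈ A n
      · rw [Function.comp_apply, Set.indicator_of_mem h, hφdef,
          Set.indicator_of_mem (show (fun q : ℤ × ℤ => ε q ω) ∈
            {g : ℤ × ℤ → ℕ | ∀ k, g (p k) = n k} from (hAmem n ω).mp h)]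
      · rw [Function.comp_apply, Set.indicator_of_notMem h, hφdef,
          Set.indicator_of_notMem (show (fun q : ℤ × ℤ => ε q ω) ∉
            {g : ℤ × ℤ → ℕ | ∀ k, g (p k) = n k} from
              fun hmem => h ((hAmem n ω).mpr hmem))]
    have heqψ : (ψ ∘ fun ω (pr : (ℤ × ℤ) × ℕ) => Z pr.1 pr.2 ω) = G := by
      funext ω
      rw [Function.comp_apply, hψdef, hGdef]
    rw [heqφ, heqψ] at hIndep0
    have hImeas : Measurable (Set.indicator (A n) (fun _ => (1:ℝ))) :=
      measurable_const.indicator (hAm n)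
    rw [hIndep0.integral_fun_mul_eq_mul_integral hImeas.aestronglyMeasurable hGmeas.aestronglyMeasurable,
      integral_indicator_const (1:ℝ) (hAm n)]
    have hdisjT : Set.PairwiseDisjoint (↑(Finset.univ : Finset (Fin (q1+1) × Fin (q2+1))))
        (fun k => (range (n k)).image (fun r => (p k, r))) := by
      intro k _ k' _ hkk'
      refine Finset.disjoint_left.mpr fun q hq hq' => ?_
      obtain ⟨r, _, rfl⟩ := Finset.mem_image.mp hq
      obtain ⟨r', _, hr'⟩ := Finset.mem_image.mp hq'
      have hpp : p k' = p k := congrArg Prod.fst hr'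
      exact hkk' ((hpinj hpp).symm)
    set T : Finset ((ℤ × ℤ) × ℕ) := Finset.univ.biUnion
      (fun k : Fin (q1+1) × Fin (q2+1) => (range (n k)).image (fun r => (p k, r))) with hTdef

    have hGT : ∀ ω, G ω = ∏ q ∈ T, W q ω := by
      intro ω
      rw [hGdef, hTdef, Finset.prod_biUnion hdisjT]
      exact Finset.prod_congr rfl fun k _ =>
        (Finset.prod_image (g := fun r : ℕ => (p k, r)) (f := fun q => W q ω)
          (fun r _ r' _ h => (Prod.ext_iff.mp h).2)).symm
    have hGint : ∫ ω, G ω ∂P = ∏ k, a k ^ n k := by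
      rw [integral_congr_ae (Filter.Eventually.of_forall hGT),
        my_integral_finset_prod_of_iIndep hWind hWmeas T, hTdef,
        Finset.prod_biUnion hdisjT]
      refine Finset.prod_congr rfl fun k _ => ?_
      rw [Finset.prod_image (g := fun r : ℕ => (p k, r))
        (f := fun q => ∫ ω, W q ω ∂P) (fun r _ r' _ h => (Prod.ext_iff.mp h).2),
        Finset.prod_congr rfl (fun r _ => hWint k r), Finset.prod_const,
        Finset.card_range]
    rw [hGint]
    simp [smul_eq_mul, measureReal_def]
  -- measure of pieces
  have hPA : ∀ n : (Fin (q1+1) × Fin (q2+1) → ℕ),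
      P (A n) = ∏ k, P (ε (p k) ⁻¹' {n k}) := by
    intro n
    set S : Finset (ℤ × ℤ) := Finset.univ.image p with hSdef
    set sets : ℤ × ℤ → Set ℕ := fun q => {m | ∀ k, p k = q → n k = m} with hsetsdef
    have hsets_meas : ∀ q ∈ S, MeasurableSet (sets q) :=
      fun q _ => (Set.to_countable _).measurableSet
    have hkey := hεiid.measure_inter_preimage_eq_mul S hsets_meas
    have hsets_pk : ∀ k, sets (p k) = {n k} := by
      intro k
      rw [hsetsdef]
      ext m
      simp only [Set.mem_setOf_eq, Set.mem_singleton_iff]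
      constructor
      · intro h
        exact (h k rfl).symm
      · intro h k' hk'
        rw [hpinj hk']
        exact h.symm
    have hInter : (⋂ q ∈ S, ε q ⁻¹' sets q) = A n := by
      rw [hSdef]
      ext ω
      simp only [Set.mem_iInter, Set.mem_preimage, Finset.mem_image,
        Finset.mem_univ, true_and, Finset.mem_coe]
      rw [hAmem n ω]
      constructor
      · intro h k
        have h2 := h (p k) ⟨k, rfl⟩
        rw [hsets_pk k] at h2
        exact h2
      · intro h q hq
        obtain ⟨k, rfl⟩ := hq
        rw [hsets_pk k]
        exact h k
    have hProd : ∏ q ∈ S, P (ε q ⁻¹' sets q) = ∏ k, P (ε (p k) ⁻¹' {n k}) := by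
      rw [hSdef, Finset.prod_image (fun k _ k' _ h => hpinj h)]
      exact Finset.prod_congr rfl fun k _ => by rw [hsets_pk k]
    rw [← hInter, hkey, hProd]
  -- identical distribution of the innovations
  have h3 : ∀ (q : ℤ × ℤ) (m : ℕ), P (ε q ⁻¹' {m}) = P (ε (0,0) ⁻¹' {m}) := by
    intro q m
    rw [← Measure.map_apply (hεmeas q) (measurableSet_singleton m), hεid q,
      Measure.map_apply (hεmeas (0,0)) (measurableSet_singleton m)]
  set ρ : ℕ → ℝ := fun m => (P (ε (0,0) ⁻¹' {m})).toReal with hρdef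
  have hρ0 : ∀ m, 0 ≤ ρ m := fun m => ENNReal.toReal_nonneg
  have hρle : ∀ m, P (ε (0,0) ⁻¹' {m}) ≤ 1 := fun m => prob_le_one
  have hρsum : Summable ρ := by
    refine ENNReal.summable_toReal ?_
    have hcup : (⋃ m : ℕ, ε (0,0) ⁻¹' {m}) = Set.univ := by
      ext ω; simp
    have hdisj : Pairwise (Function.onFun Disjoint (fun m : ℕ => ε (0,0) ⁻¹' {m})) := by
      intro m m' hne
      refine Set.disjoint_left.mpr fun ω h1 h2 => hne ?_
      simp only [Set.mem_preimage, Set.mem_singleton_iff] at h1 h2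
      rw [← h1, ← h2]
    have := measure_iUnion (μ := P) hdisj
      (fun m => hεmeas (0,0) (measurableSet_singleton m))
    rw [hcup] at this
    rw [← this]
    simp
  -- the pgf of the innovations
  have hpgf : ∀ v : ℝ, 0 ≤ v → v ≤ 1 →
      ∫ ω, v ^ ε (0,0) ω ∂P = ∑' m, ρ m * v ^ m := by
    intro v hv0 hv1
    have hpm : IsProbabilityMeasure (P.map (ε (0,0))) :=
      Measure.isProbabilityMeasure_map (hεmeas (0,0)).aemeasurable
    have hmi : Integrable (fun m : ℕ => v ^ m) (P.map (ε (0,0))) := by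
      refine (integrable_const (1:ℝ)).mono'
        (measurable_from_top (f := fun m : ℕ => v ^ m)).aestronglyMeasurable
        (Filter.Eventually.of_forall fun m => ?_)
      rw [Real.norm_eq_abs, abs_le]
      exact ⟨by linarith [pow_nonneg hv0 m], pow_le_one₀ hv0 hv1⟩
    rw [← integral_map (hεmeas (0,0)).aemeasurable
      (measurable_from_top (f := fun m : ℕ => v ^ m)).aestronglyMeasurable,
      integral_countable hmi]
    refine tsum_congr fun m => ?_
    rw [measureReal_def, Measure.map_apply (hεmeas (0,0)) (measurableSet_singleton m), hρdef,
      smul_eq_mul]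
  -- summability of the factors
  have hbsum : ∀ k : Fin (q1+1) × Fin (q2+1), Summable (fun m => ρ m * a k ^ m) := by
    intro k
    refine Summable.of_nonneg_of_le
      (fun m => mul_nonneg (hρ0 m) (pow_nonneg (ha0 k) m)) (fun m => ?_) hρsum
    calc ρ m * a k ^ m ≤ ρ m * 1 := by
          exact mul_le_mul_of_nonneg_left (pow_le_one₀ (ha0 k) (ha1 k)) (hρ0 m)
      _ = ρ m := mul_one _
  -- main chain
  calc ∫ ω, (u:ℝ) ^ X s t ω ∂P
      = ∫ ω in Set.univ, (u:ℝ) ^ X s t ω ∂P := setIntegral_univ.symm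
    _ = ∫ ω in (⋃ n, A n), (u:ℝ) ^ X s t ω ∂P := by rw [hAunion]
    _ = ∑' n, ∫ ω in A n, (u:ℝ) ^ X s t ω ∂P := by
        refine integral_iUnion hAm hAdisj ?_
        exact (hint _ hUXmeas hUXrange).integrableOn
    _ = ∑' n : (Fin (q1+1) × Fin (q2+1) → ℕ), ∏ k, (ρ (n k) * a k ^ n k) := by
        refine tsum_congr fun n => ?_
        rw [hG n, hPA n, Finset.prod_mul_distrib]
        congr 1
        rw [ENNReal.toReal_prod]
        exact Finset.prod_congr rfl fun k _ => by rw [h3 (p k) (n k), hρdef]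
    _ = ∏ k, ∑' m, ρ m * a k ^ m := by
        exact my_pi_tsum_prod (fun k m => ρ m * a k ^ m)
          (fun k m => mul_nonneg (hρ0 m) (pow_nonneg (ha0 k) m)) hbsum
    _ = ∏ k : Fin (q1+1) × Fin (q2+1), ∫ ω, a k ^ ε (0,0) ω ∂P := by
        exact Finset.prod_congr rfl fun k _ => (hpgf (a k) (ha0 k) (ha1 k)).symm
    _ = ∏ i ∈ range (q1 + 1), ∏ j ∈ range (q2 + 1),
          ∫ ω, (1 + β i j * (u - 1)) ^ ε (0, 0) ω ∂P := by
        rw [Fintype.prod_prod_type (fun k : Fin (q1+1) × Fin (q2+1) =>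
          ∫ ω, a k ^ ε (0,0) ω ∂P)]
        rw [Fin.prod_univ_eq_prod_range (fun i => ∏ k2 : Fin (q2+1),
          ∫ ω, (1 + β i k2 * (u - 1)) ^ ε (0,0) ω ∂P) (q1+1)]
        refine Finset.prod_congr rfl fun i _ => ?_
        rw [Fin.prod_univ_eq_prod_range (fun j =>
          ∫ ω, (1 + β i j * (u - 1)) ^ ε (0,0) ω ∂P) (q2+1)]
end

section
/- Let ε be an ℕ-valued random variable with finite mean μ_ε and finite variance σ_ε², and let ((Z_r, Z'_r))_{r∈ℕ} be an i.i.d. sequence of pairs of {0,1}-valued random variables (the two coordinates within a pair possibly dependent), independent of ε, with P(Z_1 = 1) = β and P(Z'_1 = 1) = β'. Then the two thinnings β ∘ ε := ∑_{r=1}^{ε} Z_r and β' ∘ ε := ∑_{r=1}^{ε} Z'_r satisfy Cov(β ∘ ε, β' ∘ ε) = β β' σ_ε² + μ_ε · ( P(Z_1 = Z'_1 = 1) − β β' ). -/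
open MeasureTheory ProbabilityTheory Finset

section Aux

variable {Ω : Type*} [MeasurableSpace Ω]

/-- Expectation of a {0,1}-valued natural random variable. -/
lemma aux_int_eq (P : Measure Ω) [IsProbabilityMeasure P] (X : Ω → ℕ) (hX : Measurable X)
    (h1 : ∀ ω, X ω ≤ 1) {b : ℝ} (hb : 0 ≤ b) (hP : P {ω | X ω = 1} = ENNReal.ofReal b) :
    ∫ ω, (X ω : ℝ) ∂P = b := by
  have h : (fun ω => (X ω : ℝ)) = Set.indicator (X ⁻¹' {1}) (fun _ => (1 : ℝ)) := by
    funext ω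
    by_cases h : X ω = 1
    · simp [Set.indicator, h]
    · have h0 : X ω = 0 := by have := h1 ω; omega
      simp [Set.indicator, Set.mem_preimage, h0]
  have hPset : P (X ⁻¹' {1}) = ENNReal.ofReal b := hP
  rw [h, integral_indicator_const _ (hX (measurableSet_singleton 1)), measureReal_def, hPset,
    ENNReal.toReal_ofReal hb, smul_eq_mul, mul_one]

end Aux

/-- Covariance of two binomial thinnings applied to the same innovation. -/
theorem cov_two_thinnings
    {Ω : Type*} [MeasurableSpace Ω] (P : Measure Ω) [IsProbabilityMeasure P]
    (ε : Ω → ℕ) (hεmeas : Measurable ε)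
    (hεL2 : Integrable (fun ω => ((ε ω : ℝ)) ^ 2) P)
    (με : ℝ) (hμε : με = ∫ ω, (ε ω : ℝ) ∂P)
    (σε2 : ℝ) (hσε2 : σε2 = variance (fun ω => (ε ω : ℝ)) P)
    -- the i.i.d. pairs of counting series, independent of ε
    (W : ℕ → Ω → ℕ × ℕ) (hWmeas : ∀ r, Measurable (W r))
    (hW01 : ∀ r ω, (W r ω).1 ≤ 1 ∧ (W r ω).2 ≤ 1)
    (hWiid : iIndepFun W P)
    (hWid : ∀ r, Measure.map (W r) P = Measure.map (W 0) P)
    (hindep : IndepFun ε (fun ω (r : ℕ) => W r ω) P)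
    (β β' : ℝ) (hβmem : β ∈ Set.Icc (0 : ℝ) 1) (hβ'mem : β' ∈ Set.Icc (0 : ℝ) 1)
    (hβ : P {ω | (W 0 ω).1 = 1} = ENNReal.ofReal β)
    (hβ' : P {ω | (W 0 ω).2 = 1} = ENNReal.ofReal β')
    -- the two thinnings β ∘ ε and β' ∘ ε
    (S S' : Ω → ℕ)
    (hS : ∀ ω, S ω = ∑ r ∈ Finset.range (ε ω), (W r ω).1)
    (hS' : ∀ ω, S' ω = ∑ r ∈ Finset.range (ε ω), (W r ω).2) :
    (∫ ω, (S ω : ℝ) * (S' ω : ℝ) ∂P)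
      - (∫ ω, (S ω : ℝ) ∂P) * (∫ ω, (S' ω : ℝ) ∂P) =
      β * β' * σε2 + με * ((P {ω | W 0 ω = (1, 1)}).toReal - β * β') := by
  obtain ⟨hβ0, hβ1⟩ := hβmem
  obtain ⟨hβ'0, hβ'1⟩ := hβ'mem
  set γ : ℝ := (P {ω | W 0 ω = (1, 1)}).toReal with hγdef
  have hγ0 : 0 ≤ γ := ENNReal.toReal_nonneg
  have hcast : Measurable fun k : ℕ => (k : ℝ) := measurable_from_top
  -- real-valued coordinate variables
  set Z : ℕ → Ω → ℝ := fun r ω => ((W r ω).1 : ℝ) with hZdef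
  set Z' : ℕ → Ω → ℝ := fun r ω => ((W r ω).2 : ℝ) with hZ'def
  have hZmeas : ∀ r, Measurable (Z r) := fun r => hcast.comp (hWmeas r).fst
  have hZ'meas : ∀ r, Measurable (Z' r) := fun r => hcast.comp (hWmeas r).snd
  have hZbd : ∀ r ω, |Z r ω| ≤ 1 := fun r ω => by
    rw [abs_of_nonneg (by positivity)]
    simp only [hZdef]
    exact_mod_cast (hW01 r ω).1
  have hZ'bd : ∀ r ω, |Z' r ω| ≤ 1 := fun r ω => by
    rw [abs_of_nonneg (by positivity)]
    simp only [hZ'def]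
    exact_mod_cast (hW01 r ω).2
  -- integrability of bounded functions
  have hbdd : ∀ f : Ω → ℝ, Measurable f → (∀ ω, |f ω| ≤ 1) → Integrable f P := fun f hf hb =>
    (integrable_const (1 : ℝ)).mono' hf.aestronglyMeasurable
      (Filter.Eventually.of_forall fun ω => by simpa using hb ω)
  have hZint : ∀ r, Integrable (Z r) P := fun r => hbdd _ (hZmeas r) (hZbd r)
  have hZ'int : ∀ r, Integrable (Z' r) P := fun r => hbdd _ (hZ'meas r) (hZ'bd r)
  have hZZint : ∀ r s, Integrable (fun ω => Z r ω * Z' s ω) P := fun r s =>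
    hbdd _ ((hZmeas r).mul (hZ'meas s)) fun ω => by
      rw [abs_mul]
      calc |Z r ω| * |Z' s ω| ≤ 1 * 1 :=
            mul_le_mul (hZbd r ω) (hZ'bd s ω) (abs_nonneg _) zero_le_one
        _ = 1 := one_mul 1
  -- transport of laws
  have hmap : ∀ (r : ℕ) (g : ℕ × ℕ → ℝ), Measurable g →
      ∫ ω, g (W r ω) ∂P = ∫ ω, g (W 0 ω) ∂P := by
    intro r g hg
    rw [← integral_map (hWmeas r).aemeasurable hg.aestronglyMeasurable, hWid r,
      integral_map (hWmeas 0).aemeasurable hg.aestronglyMeasurable]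
  -- expectations of the coordinates
  have hEZ : ∀ r, ∫ ω, Z r ω ∂P = β := by
    intro r
    have h := hmap r (fun p => ((p.1 : ℕ) : ℝ)) (hcast.comp measurable_fst)
    rw [hZdef]
    rw [show (fun ω => ((W r ω).1 : ℝ)) = fun ω => (((W r ω).1 : ℕ) : ℝ) from rfl]
    calc ∫ ω, (((W r ω).1 : ℕ) : ℝ) ∂P = ∫ ω, (((W 0 ω).1 : ℕ) : ℝ) ∂P := h
      _ = β := aux_int_eq P (fun ω => (W 0 ω).1) (hWmeas 0).fst
            (fun ω => (hW01 0 ω).1) hβ0 hβ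
  have hEZ' : ∀ r, ∫ ω, Z' r ω ∂P = β' := by
    intro r
    have h := hmap r (fun p => ((p.2 : ℕ) : ℝ)) (hcast.comp measurable_snd)
    rw [hZ'def]
    calc ∫ ω, (((W r ω).2 : ℕ) : ℝ) ∂P = ∫ ω, (((W 0 ω).2 : ℕ) : ℝ) ∂P := h
      _ = β' := aux_int_eq P (fun ω => (W 0 ω).2) (hWmeas 0).snd
            (fun ω => (hW01 0 ω).2) hβ'0 hβ'
  -- diagonal expectation
  have hdiag : ∀ r, ∫ ω, Z r ω * Z' r ω ∂P = γ := by
    intro r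
    have hmul : ∀ (u : ℕ) (ω : Ω), Z u ω * Z' u ω = (((W u ω).1 * (W u ω).2 : ℕ) : ℝ) := by
      intro u ω; rw [hZdef, hZ'def]; push_cast; ring
    have hgm : Measurable fun p : ℕ × ℕ => ((p.1 * p.2 : ℕ) : ℝ) :=
      hcast.comp (measurable_fst.mul measurable_snd)
    have h := hmap r (fun p => ((p.1 * p.2 : ℕ) : ℝ)) hgm
    have hset : {ω | (W 0 ω).1 * (W 0 ω).2 = 1} = {ω | W 0 ω = (1, 1)} := by
      ext ω
      simp only [Set.mem_setOf_eq, Prod.ext_iff]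
      constructor
      · intro h
        have h1 := (hW01 0 ω).1
        have e1 : (W 0 ω).1 = 1 := by
          rcases Nat.le_one_iff_eq_zero_or_eq_one.mp h1 with h' | h'
          · rw [h'] at h; omega
          · exact h'
        have e2 : (W 0 ω).2 = 1 := by rw [e1, one_mul] at h; exact h
        exact ⟨e1, e2⟩
      · rintro ⟨e1, e2⟩; rw [e1, e2]
    have hP : P {ω | (W 0 ω).1 * (W 0 ω).2 = 1} = ENNReal.ofReal γ := by
      rw [hset, hγdef, ENNReal.ofReal_toReal (measure_ne_top P _)]
    calc ∫ ω, Z r ω * Z' r ω ∂P = ∫ ω, (((W r ω).1 * (W r ω).2 : ℕ) : ℝ) ∂P := by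
          simp_rw [hmul r]
      _ = ∫ ω, (((W 0 ω).1 * (W 0 ω).2 : ℕ) : ℝ) ∂P := h
      _ = γ := aux_int_eq P (fun ω => (W 0 ω).1 * (W 0 ω).2)
            ((hWmeas 0).fst.mul (hWmeas 0).snd)
            (fun ω => by simpa using Nat.mul_le_mul (hW01 0 ω).1 (hW01 0 ω).2) hγ0 hP
  -- cross expectations
  have hcross : ∀ r s, r ≠ s → ∫ ω, Z r ω * Z' s ω ∂P = β * β' := by
    intro r s hrs
    have hi : IndepFun (Z r) (Z' s) P :=
      (hWiid.indepFun hrs).comp (hcast.comp measurable_fst) (hcast.comp measurable_snd)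
    have := hi.integral_mul_eq_mul_integral (hZmeas r).aestronglyMeasurable (hZ'meas s).aestronglyMeasurable
    rw [show (∫ ω, Z r ω * Z' s ω ∂P) = integral P (Z r * Z' s) from rfl, this,
      hEZ r, hEZ' s]
  -- finite-sum processes
  set T : ℕ → Ω → ℝ := fun n ω => ∑ r ∈ Finset.range n, Z r ω with hTdef
  set T' : ℕ → Ω → ℝ := fun n ω => ∑ r ∈ Finset.range n, Z' r ω with hT'def
  have hET : ∀ n, ∫ ω, T n ω ∂P = n * β := by
    intro n
    rw [hTdef]
    rw [integral_finset_sum _ fun r _ => hZint r]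
    rw [Finset.sum_congr rfl fun r _ => hEZ r, Finset.sum_const, Finset.card_range,
      nsmul_eq_mul]
  have hET' : ∀ n, ∫ ω, T' n ω ∂P = n * β' := by
    intro n
    rw [hT'def]
    rw [integral_finset_sum _ fun r _ => hZ'int r]
    rw [Finset.sum_congr rfl fun r _ => hEZ' r, Finset.sum_const, Finset.card_range,
      nsmul_eq_mul]
  have hETT : ∀ n, ∫ ω, T n ω * T' n ω ∂P
      = (n : ℝ) ^ 2 * (β * β') + (n : ℝ) * (γ - β * β') := by
    intro n
    have expand : ∀ ω, T n ω * T' n ω = ∑ r ∈ Finset.range n, ∑ s ∈ Finset.range n,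
        Z r ω * Z' s ω := fun ω => by rw [hTdef, hT'def, Finset.sum_mul_sum]
    calc ∫ ω, T n ω * T' n ω ∂P
        = ∑ r ∈ Finset.range n, ∑ s ∈ Finset.range n, ∫ ω, Z r ω * Z' s ω ∂P := by
          simp_rw [expand]
          rw [integral_finset_sum _ fun r _ => integrable_finset_sum _ fun s _ => hZZint r s]
          exact Finset.sum_congr rfl fun r _ =>
            integral_finset_sum _ fun s _ => hZZint r s
      _ = ∑ r ∈ Finset.range n, ∑ s ∈ Finset.range n,
            ((β * β') + if r = s then γ - β * β' else 0) := by
          refine Finset.sum_congr rfl fun r _ => Finset.sum_congr rfl fun s _ => ?_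
          by_cases h : r = s
          · subst h; rw [hdiag r]; simp
          · rw [hcross r s h]; simp [h]
      _ = (n : ℝ) ^ 2 * (β * β') + (n : ℝ) * (γ - β * β') := by
          simp only [Finset.sum_add_distrib, Finset.sum_const, Finset.card_range,
            nsmul_eq_mul, Finset.sum_ite_eq, Finset.mem_range]
          rw [Finset.sum_congr rfl fun r hr => if_pos (Finset.mem_range.mp hr)]
          rw [Finset.sum_const, Finset.card_range, nsmul_eq_mul]
          ring
  -- partition sets
  set p : ℕ → ℝ := fun n => (P (ε ⁻¹' {n})).toReal with hpdef
  have hm : ∀ n : ℕ, MeasurableSet (ε ⁻¹' {n}) := fun n => hεmeas (measurableSet_singleton n)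
  have hd : Pairwise (Function.onFun Disjoint fun n : ℕ => ε ⁻¹' {n}) := fun m n hmn =>
    Set.disjoint_left.2 fun ω h1 h2 => hmn (by
      simp only [Set.mem_preimage, Set.mem_singleton_iff] at h1 h2
      rw [← h1, ← h2])
  have hU : (⋃ n : ℕ, ε ⁻¹' {n}) = Set.univ :=
    Set.iUnion_eq_univ_iff.2 fun ω => ⟨ε ω, by simp⟩
  -- general decomposition lemma
  have key : ∀ (f : Ω → ℝ) (c : ℕ → ℝ), Integrable f P →
      (∀ n, ∫ ω in ε ⁻¹' {n}, f ω ∂P = p n * c n) →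
      HasSum (fun n => p n * c n) (∫ ω, f ω ∂P) := by
    intro f c hint hset
    have h := hasSum_integral_iUnion hm hd (hint.integrableOn (s := ⋃ n : ℕ, ε ⁻¹' {n}))
    rw [hU, setIntegral_univ] at h
    have h2 : (fun n => ∫ ω in ε ⁻¹' {n}, f ω ∂P) = fun n => p n * c n := funext hset
    rwa [h2] at h
  -- independence factorization for functionals of the W sequence
  have key2 : ∀ (n : ℕ) (ψ : (ℕ → ℕ × ℕ) → ℝ), Measurable ψ →
      ∫ ω in ε ⁻¹' {n}, ψ (fun r => W r ω) ∂P = p n * ∫ ω, ψ (fun r => W r ω) ∂P := by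
    intro n ψ hψ
    have hφ : Measurable fun m : ℕ => if m = n then (1 : ℝ) else 0 := measurable_from_top
    have hii : IndepFun (fun ω => if ε ω = n then (1 : ℝ) else 0)
        (fun ω => ψ (fun r => W r ω)) P := hindep.comp hφ hψ
    have hWseqmeas : Measurable fun ω (r : ℕ) => W r ω :=
      measurable_pi_lambda _ fun r => hWmeas r
    have hmul := hii.integral_mul_eq_mul_integral (hφ.comp hεmeas).aestronglyMeasurable
      (hψ.comp hWseqmeas).aestronglyMeasurable
    have hind : ∫ ω, (if ε ω = n then (1 : ℝ) else 0) ∂P = p n := by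
      have h1 : (fun ω => if ε ω = n then (1 : ℝ) else 0)
          = Set.indicator (ε ⁻¹' {n}) (fun _ => (1 : ℝ)) := by
        funext ω; by_cases h : ε ω = n <;> simp [Set.indicator, h]
      rw [h1, integral_indicator_const _ (hm n), smul_eq_mul, mul_one, measureReal_def, hpdef]
    rw [← integral_indicator (hm n)]
    have h2 : Set.indicator (ε ⁻¹' {n}) (fun ω => ψ (fun r => W r ω))
        = (fun ω => if ε ω = n then (1 : ℝ) else 0) * fun ω => ψ (fun r => W r ω) := by
      funext ω; by_cases h : ε ω = n <;> simp [Set.indicator, h]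
    rw [h2, hmul, hind]
  -- measurability of the ψ functionals
  have hψ1 : ∀ n : ℕ, Measurable fun w : ℕ → ℕ × ℕ => ∑ r ∈ Finset.range n, ((w r).1 : ℝ) :=
    fun n => Finset.measurable_sum _ fun r _ => hcast.comp (measurable_pi_apply r).fst
  have hψ2 : ∀ n : ℕ, Measurable fun w : ℕ → ℕ × ℕ => ∑ r ∈ Finset.range n, ((w r).2 : ℝ) :=
    fun n => Finset.measurable_sum _ fun r _ => hcast.comp (measurable_pi_apply r).snd
  -- measurability of S and S'
  have hgS : ∀ n : ℕ, Measurable fun ω => ∑ r ∈ Finset.range n, (W r ω).1 :=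
    fun n => Finset.measurable_sum _ fun r _ => (hWmeas r).fst
  have hgS' : ∀ n : ℕ, Measurable fun ω => ∑ r ∈ Finset.range n, (W r ω).2 :=
    fun n => Finset.measurable_sum _ fun r _ => (hWmeas r).snd
  have hSmeas : Measurable S := by
    apply measurable_to_countable'
    intro k
    have h : S ⁻¹' {k}
        = ⋃ n : ℕ, (ε ⁻¹' {n} ∩ {x | (∑ r ∈ Finset.range n, (W r x).1) = k}) := by
      ext ω
      simp only [Set.mem_setOf_eq, Set.mem_iUnion, Set.mem_inter_iff, Set.mem_preimage,
        Set.mem_singleton_iff]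
      constructor
      · intro hk; exact ⟨ε ω, rfl, by rw [← hS ω]; exact hk⟩
      · rintro ⟨n, hn, hk⟩; rw [hS ω, hn]; exact hk
    rw [h]
    exact MeasurableSet.iUnion fun n => (hm n).inter (hgS n (measurableSet_singleton k))
  have hS'meas : Measurable S' := by
    apply measurable_to_countable'
    intro k
    have h : S' ⁻¹' {k}
        = ⋃ n : ℕ, (ε ⁻¹' {n} ∩ {x | (∑ r ∈ Finset.range n, (W r x).2) = k}) := by
      ext ω
      simp only [Set.mem_setOf_eq, Set.mem_iUnion, Set.mem_inter_iff, Set.mem_preimage,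
        Set.mem_singleton_iff]
      constructor
      · intro hk; exact ⟨ε ω, rfl, by rw [← hS' ω]; exact hk⟩
      · rintro ⟨n, hn, hk⟩; rw [hS' ω, hn]; exact hk
    rw [h]
    exact MeasurableSet.iUnion fun n => (hm n).inter (hgS' n (measurableSet_singleton k))
  -- pointwise bounds on S, S'
  have hSle : ∀ ω, S ω ≤ ε ω := by
    intro ω
    rw [hS ω]
    calc ∑ r ∈ Finset.range (ε ω), (W r ω).1 ≤ ∑ _r ∈ Finset.range (ε ω), 1 :=
          Finset.sum_le_sum fun r _ => (hW01 r ω).1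
      _ = ε ω := by simp
  have hS'le : ∀ ω, S' ω ≤ ε ω := by
    intro ω
    rw [hS' ω]
    calc ∑ r ∈ Finset.range (ε ω), (W r ω).2 ≤ ∑ _r ∈ Finset.range (ε ω), 1 :=
          Finset.sum_le_sum fun r _ => (hW01 r ω).2
      _ = ε ω := by simp
  -- integrability
  have hεmeasR : Measurable fun ω => (ε ω : ℝ) := hcast.comp hεmeas
  have hl2 : MemLp (fun ω => (ε ω : ℝ)) 2 P :=
    (memLp_two_iff_integrable_sq hεmeasR.aestronglyMeasurable).2 hεL2
  have hεint : Integrable (fun ω => (ε ω : ℝ)) P := hl2.integrable one_le_two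
  have hSint : Integrable (fun ω => (S ω : ℝ)) P := by
    refine hεint.mono' (hcast.comp hSmeas).aestronglyMeasurable
      (Filter.Eventually.of_forall fun ω => ?_)
    rw [Real.norm_eq_abs, abs_of_nonneg (by positivity)]
    exact_mod_cast hSle ω
  have hS'int : Integrable (fun ω => (S' ω : ℝ)) P := by
    refine hεint.mono' (hcast.comp hS'meas).aestronglyMeasurable
      (Filter.Eventually.of_forall fun ω => ?_)
    rw [Real.norm_eq_abs, abs_of_nonneg (by positivity)]
    exact_mod_cast hS'le ω
  have hSS'int : Integrable (fun ω => (S ω : ℝ) * (S' ω : ℝ)) P := by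
    refine hεL2.mono' ((hcast.comp hSmeas).mul (hcast.comp hS'meas)).aestronglyMeasurable
      (Filter.Eventually.of_forall fun ω => ?_)
    rw [Real.norm_eq_abs, abs_of_nonneg (by positivity), sq]
    have h1 : (S ω : ℝ) ≤ (ε ω : ℝ) := by exact_mod_cast hSle ω
    have h2 : (S' ω : ℝ) ≤ (ε ω : ℝ) := by exact_mod_cast hS'le ω
    exact mul_le_mul h1 h2 (by positivity) (by positivity)
  -- the four HasSum statements
  have hsumM : HasSum (fun n => p n * (n : ℝ)) (∫ ω, (ε ω : ℝ) ∂P) := by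
    refine key _ _ hεint fun n => ?_
    have hcong : ∀ ω ∈ ε ⁻¹' {n}, ((ε ω : ℕ) : ℝ) = ((n : ℕ) : ℝ) := fun ω hω => by
      simp only [Set.mem_preimage, Set.mem_singleton_iff] at hω
      rw [hω]
    rw [setIntegral_congr_fun (hm n) hcong, setIntegral_const, smul_eq_mul, measureReal_def]
  have hsumQ : HasSum (fun n => p n * (n : ℝ) ^ 2) (∫ ω, (ε ω : ℝ) ^ 2 ∂P) := by
    refine key _ _ hεL2 fun n => ?_
    have hcong : ∀ ω ∈ ε ⁻¹' {n}, ((ε ω : ℕ) : ℝ) ^ 2 = ((n : ℕ) : ℝ) ^ 2 := fun ω hω => by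
      simp only [Set.mem_preimage, Set.mem_singleton_iff] at hω
      rw [hω]
    rw [setIntegral_congr_fun (hm n) hcong, setIntegral_const, smul_eq_mul, measureReal_def]
  have hsumS : HasSum (fun n => p n * ((n : ℝ) * β)) (∫ ω, (S ω : ℝ) ∂P) := by
    refine key _ _ hSint fun n => ?_
    have hcong : ∀ ω ∈ ε ⁻¹' {n}, (S ω : ℝ)
        = (fun w : ℕ → ℕ × ℕ => ∑ r ∈ Finset.range n, ((w r).1 : ℝ)) (fun r => W r ω) := by
      intro ω hω
      simp only [Set.mem_preimage, Set.mem_singleton_iff] at hω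
      rw [hS ω, hω]
      push_cast
      rfl
    rw [setIntegral_congr_fun (hm n) hcong, key2 n _ (hψ1 n)]
    congr 1
    exact hET n
  have hsumS' : HasSum (fun n => p n * ((n : ℝ) * β')) (∫ ω, (S' ω : ℝ) ∂P) := by
    refine key _ _ hS'int fun n => ?_
    have hcong : ∀ ω ∈ ε ⁻¹' {n}, (S' ω : ℝ)
        = (fun w : ℕ → ℕ × ℕ => ∑ r ∈ Finset.range n, ((w r).2 : ℝ)) (fun r => W r ω) := by
      intro ω hω
      simp only [Set.mem_preimage, Set.mem_singleton_iff] at hω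
      rw [hS' ω, hω]
      push_cast
      rfl
    rw [setIntegral_congr_fun (hm n) hcong, key2 n _ (hψ2 n)]
    congr 1
    exact hET' n
  have hsumSS' : HasSum (fun n => p n * ((n : ℝ) ^ 2 * (β * β') + (n : ℝ) * (γ - β * β')))
      (∫ ω, (S ω : ℝ) * (S' ω : ℝ) ∂P) := by
    refine key _ _ hSS'int fun n => ?_
    have hψm : Measurable fun w : ℕ → ℕ × ℕ =>
        (∑ r ∈ Finset.range n, ((w r).1 : ℝ)) * (∑ r ∈ Finset.range n, ((w r).2 : ℝ)) :=
      (hψ1 n).mul (hψ2 n)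
    have hcong : ∀ ω ∈ ε ⁻¹' {n}, (S ω : ℝ) * (S' ω : ℝ)
        = (fun w : ℕ → ℕ × ℕ => (∑ r ∈ Finset.range n, ((w r).1 : ℝ))
            * (∑ r ∈ Finset.range n, ((w r).2 : ℝ))) (fun r => W r ω) := by
      intro ω hω
      simp only [Set.mem_preimage, Set.mem_singleton_iff] at hω
      rw [hS ω, hS' ω, hω]
      push_cast
      rfl
    rw [setIntegral_congr_fun (hm n) hcong, key2 n _ hψm]
    congr 1
    exact hETT n
  -- identify the integrals
  set M : ℝ := ∫ ω, (ε ω : ℝ) ∂P with hMdef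
  set Q : ℝ := ∫ ω, (ε ω : ℝ) ^ 2 ∂P with hQdef
  have hBS : ∫ ω, (S ω : ℝ) ∂P = β * M := by
    have h := hsumM.mul_left β
    have heq : (fun n => β * (p n * (n : ℝ))) = fun n => p n * ((n : ℝ) * β) :=
      funext fun n => by ring
    rw [heq] at h
    exact hsumS.unique h
  have hBS' : ∫ ω, (S' ω : ℝ) ∂P = β' * M := by
    have h := hsumM.mul_left β'
    have heq : (fun n => β' * (p n * (n : ℝ))) = fun n => p n * ((n : ℝ) * β') :=
      funext fun n => by ring
    rw [heq] at h
    exact hsumS'.unique h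
  have hA : ∫ ω, (S ω : ℝ) * (S' ω : ℝ) ∂P = (β * β') * Q + (γ - β * β') * M := by
    have h := (hsumQ.mul_left (β * β')).add (hsumM.mul_left (γ - β * β'))
    have heq : (fun n => (β * β') * (p n * (n : ℝ) ^ 2) + (γ - β * β') * (p n * (n : ℝ)))
        = fun n => p n * ((n : ℝ) ^ 2 * (β * β') + (n : ℝ) * (γ - β * β')) :=
      funext fun n => by ring
    rw [heq] at h
    exact hsumSS'.unique h
  have hvar : σε2 = Q - M ^ 2 := by
    rw [hσε2, variance_eq_sub hl2, hQdef, hMdef]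
    rfl
  rw [hBS, hBS', hA, hvar, hμε]
  ring
end

section
/- For the INMA(q1,q2) random field with Poisson-distributed innovations ε_{s,t} ~ Poi(μ_ε), μ_ε > 0, each observation is Poisson-distributed: X_{s,t} ~ Poi(μ_ε β_•); equivalently, E[u^{X_{s,t}}] = exp(μ_ε β_• (u − 1)) for all u ∈ [0,1]. (Example: Poisson INMA marginal.) -/
set_option maxHeartbeats 1000000

open MeasureTheory ProbabilityTheory Finset

section Aux

variable {Ω : Type*} [MeasurableSpace Ω] {P : Measure Ω} [IsProbabilityMeasure P]


lemma pb_shift (μ b : ℝ) (n : ℕ) (k : ℕ) :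
    Real.exp (-μ) * μ ^ (k + n) / (k + n).factorial *
      ((k + n).choose n * b ^ n * (1 - b) ^ (k + n - n))
    = (Real.exp (-μ) * (μ * b) ^ n / n.factorial) * ((μ * (1 - b)) ^ k / k.factorial) := by
  have h : ((k + n).choose n : ℝ) * n.factorial * k.factorial = (k + n).factorial := by
    exact_mod_cast congrArg (Nat.cast (R := ℝ))
      (by simpa using Nat.choose_mul_factorial_mul_factorial (Nat.le_add_left n k))
  have hn : (n.factorial : ℝ) ≠ 0 := Nat.cast_ne_zero.mpr n.factorial_ne_zero
  have hk : (k.factorial : ℝ) ≠ 0 := Nat.cast_ne_zero.mpr k.factorial_ne_zero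
  have hkn : ((k + n).factorial : ℝ) ≠ 0 := Nat.cast_ne_zero.mpr (k + n).factorial_ne_zero
  have hs : k + n - n = k := by omega
  rw [hs, mul_pow]
  field_simp
  rw [mul_pow, ← h]
  ring

lemma poisson_binomial_summable (μ b : ℝ) (n : ℕ) :
    Summable (fun k : ℕ => Real.exp (-μ) * μ ^ k / k.factorial *
      (k.choose n * b ^ n * (1 - b) ^ (k - n))) := by
  rw [← summable_nat_add_iff n]
  have : (fun k : ℕ => Real.exp (-μ) * μ ^ (k + n) / (k + n).factorial *
      ((k + n).choose n * b ^ n * (1 - b) ^ (k + n - n)))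
      = fun k : ℕ => (Real.exp (-μ) * (μ * b) ^ n / n.factorial) *
        ((μ * (1 - b)) ^ k / k.factorial) := funext fun k => pb_shift μ b n k
  rw [this]
  exact (Real.summable_pow_div_factorial _).mul_left _

lemma poisson_binomial_tsum (μ b : ℝ) (n : ℕ) :
    ∑' k : ℕ, Real.exp (-μ) * μ ^ k / k.factorial *
      (k.choose n * b ^ n * (1 - b) ^ (k - n))
      = Real.exp (-(μ * b)) * (μ * b) ^ n / n.factorial := by
  have hsum := poisson_binomial_summable μ b n
  rw [← hsum.sum_add_tsum_nat_add n]
  have h0 : ∑ i ∈ range n, Real.exp (-μ) * μ ^ i / i.factorial *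
      (i.choose n * b ^ n * (1 - b) ^ (i - n)) = 0 := by
    refine Finset.sum_eq_zero fun i hi => ?_
    rw [Nat.choose_eq_zero_of_lt (mem_range.mp hi)]
    simp
  have h1 : ∀ k : ℕ, Real.exp (-μ) * μ ^ (k + n) / (k + n).factorial *
      ((k + n).choose n * b ^ n * (1 - b) ^ (k + n - n))
      = (Real.exp (-μ) * (μ * b) ^ n / n.factorial) *
        ((μ * (1 - b)) ^ k / k.factorial) := pb_shift μ b n
  rw [h0, zero_add]
  calc ∑' k : ℕ, Real.exp (-μ) * μ ^ (k + n) / (k + n).factorial *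
        ((k + n).choose n * b ^ n * (1 - b) ^ (k + n - n))
      = ∑' k : ℕ, (Real.exp (-μ) * (μ * b) ^ n / n.factorial) *
        ((μ * (1 - b)) ^ k / k.factorial) := by exact tsum_congr h1
    _ = (Real.exp (-μ) * (μ * b) ^ n / n.factorial) * Real.exp (μ * (1 - b)) := by
        rw [tsum_mul_left, Real.exp_eq_exp_ℝ, NormedSpace.exp_eq_tsum_div]
    _ = Real.exp (-(μ * b)) * (μ * b) ^ n / n.factorial := by
        rw [div_mul_eq_mul_div, mul_right_comm, ← Real.exp_add]
        ring_nf

lemma meas_fiber {f : Ω → ℕ} (hf : Measurable f) (n : ℕ) :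
    MeasurableSet {ω | f ω = n} := hf (measurableSet_singleton n)

omit [IsProbabilityMeasure P] in
lemma indep_fiber {f g : Ω → ℕ} (h : IndepFun f g P) (a c : ℕ) :
    P ({ω | f ω = a} ∩ {ω | g ω = c}) = P {ω | f ω = a} * P {ω | g ω = c} :=
  h.measure_inter_preimage_eq_mul {a} {c} (measurableSet_singleton a) (measurableSet_singleton c)


lemma sum_bernoulli_binomial (B : ℕ → Ω → ℕ) (hBmeas : ∀ r, Measurable (B r))
    (hB1 : ∀ r ω, B r ω ≤ 1)
    (hBind : iIndepFun B P)
    (b : ℝ) (hb0 : 0 ≤ b) (hb1 : b ≤ 1)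
    (hBb : ∀ r, P {ω | B r ω = 1} = ENNReal.ofReal b) :
    ∀ k n, P {ω | ∑ r ∈ range k, B r ω = n}
      = ENNReal.ofReal (k.choose n * b ^ n * (1 - b) ^ (k - n)) := by
  have hb' : (0:ℝ) ≤ 1 - b := by linarith
  have hterm : ∀ k n : ℕ, 0 ≤ (k.choose n : ℝ) * b ^ n * (1 - b) ^ (k - n) := fun k n =>
    mul_nonneg (mul_nonneg (Nat.cast_nonneg _) (pow_nonneg hb0 _)) (pow_nonneg hb' _)
  intro k
  induction k with
  | zero =>
      intro n
      cases n with
      | zero => simp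
      | succ m => simp [Set.setOf_false]
  | succ k ih =>
      -- independence of partial sum and the new summand
      have hSmeas : Measurable (fun ω => ∑ r ∈ range k, B r ω) := by
        exact Finset.measurable_sum _ fun r _ => hBmeas r
      have hind : IndepFun (fun ω => ∑ r ∈ range k, B r ω) (B k) P := by
        have := hBind.indepFun_finsetSum_of_notMem hBmeas
          (show k ∉ range k by simp)
        have he : (∑ j ∈ range k, B j) = fun ω => ∑ r ∈ range k, B r ω := by
          funext ω; simp
        rwa [he] at this
      have hB0 : P {ω | B k ω = 0} = ENNReal.ofReal (1 - b) := by
        have hcompl : {ω | B k ω = 0} = {ω | B k ω = 1}ᶜ := by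
          ext ω
          have := hB1 k ω
          simp only [Set.mem_setOf_eq, Set.mem_compl_iff]
          omega
        rw [hcompl, measure_compl (meas_fiber (hBmeas k) 1) (measure_ne_top _ _), hBb k,
          measure_univ, ← ENNReal.ofReal_one, ← ENNReal.ofReal_sub _ hb0]
      intro n
      have hsplit : ∀ ω, ∑ r ∈ range (k+1), B r ω = (∑ r ∈ range k, B r ω) + B k ω := by
        intro ω; rw [Finset.sum_range_succ]
      cases n with
      | zero =>
          have hev : {ω | ∑ r ∈ range (k+1), B r ω = 0}
              = {ω | ∑ r ∈ range k, B r ω = 0} ∩ {ω | B k ω = 0} := by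
            ext ω; simp only [Set.mem_setOf_eq, Set.mem_inter_iff, hsplit ω]; omega
          rw [hev, indep_fiber hind, ih 0, hB0, ← ENNReal.ofReal_mul (hterm k 0)]
          congr 1
          simp [pow_succ]
      | succ n =>
          have hev : {ω | ∑ r ∈ range (k+1), B r ω = n+1}
              = ({ω | ∑ r ∈ range k, B r ω = n+1} ∩ {ω | B k ω = 0})
                ∪ ({ω | ∑ r ∈ range k, B r ω = n} ∩ {ω | B k ω = 1}) := by
            ext ω
            have := hB1 k ω
            simp only [Set.mem_setOf_eq, Set.mem_inter_iff, Set.mem_union, hsplit ω]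
            omega
          have hdisj : Disjoint
              ({ω | ∑ r ∈ range k, B r ω = n+1} ∩ {ω | B k ω = 0})
              ({ω | ∑ r ∈ range k, B r ω = n} ∩ {ω | B k ω = 1}) := by
            refine Set.disjoint_left.mpr fun ω h1 h2 => ?_
            have := h1.2; have := h2.2
            simp_all
          rw [hev, measure_union hdisj ((meas_fiber hSmeas n).inter (meas_fiber (hBmeas k) 1)),
            indep_fiber hind, indep_fiber hind, ih (n+1), ih n, hB0, hBb k,
            ← ENNReal.ofReal_mul (hterm k (n+1)), ← ENNReal.ofReal_mul (hterm k n),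
            ← ENNReal.ofReal_add (mul_nonneg (hterm k (n+1)) hb') (mul_nonneg (hterm k n) hb0)]
          congr 1
          rcases le_or_gt (n + 1) k with hnk | hnk
          · have h1 : k - (n+1) + 1 = k - n := by omega
            have h2 : k + 1 - (n + 1) = k - n := by omega
            rw [Nat.choose_succ_succ' k n, h2]
            push_cast
            rw [← h1]
            ring
          · rcases Nat.eq_or_lt_of_le (Nat.lt_succ_iff.mp hnk) with hkn | hkn
            · subst hkn
              simp only [Nat.choose_eq_zero_of_lt (Nat.lt_succ_self _), Nat.choose_self,
                Nat.sub_self, pow_zero, Nat.cast_zero, Nat.cast_one, Nat.add_sub_cancel]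
              ring
            · rw [Nat.choose_eq_zero_of_lt hkn, Nat.choose_eq_zero_of_lt (by omega),
                Nat.choose_eq_zero_of_lt (by omega)]
              simp

lemma thinning_poisson (N : Ω → ℕ) (hN : Measurable N)
    (B : ℕ → Ω → ℕ) (hBmeas : ∀ r, Measurable (B r)) (hB1 : ∀ r ω, B r ω ≤ 1)
    (hBind : iIndepFun B P)
    (μ b : ℝ) (hμ : 0 ≤ μ) (hb0 : 0 ≤ b) (hb1 : b ≤ 1)
    (hNpois : ∀ k, P {ω | N ω = k}
      = ENNReal.ofReal (Real.exp (-μ) * μ ^ k / k.factorial))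
    (hBb : ∀ r, P {ω | B r ω = 1} = ENNReal.ofReal b)
    (hNB : ∀ k : ℕ, IndepFun N (fun ω => ∑ r ∈ range k, B r ω) P) :
    ∀ n, P {ω | ∑ r ∈ range (N ω), B r ω = n}
      = ENNReal.ofReal (Real.exp (-(μ * b)) * (μ * b) ^ n / n.factorial) := by
  intro n
  have hb' : (0:ℝ) ≤ 1 - b := by linarith
  have hev : {ω | ∑ r ∈ range (N ω), B r ω = n}
      = ⋃ k : ℕ, ({ω | N ω = k} ∩ {ω | ∑ r ∈ range k, B r ω = n}) := by
    ext ω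
    simp only [Set.mem_setOf_eq, Set.mem_iUnion, Set.mem_inter_iff]
    exact ⟨fun h => ⟨N ω, rfl, h⟩, fun ⟨k, hk, h⟩ => by rw [← hk] at h; exact h⟩
  have hSmeas : ∀ k : ℕ, Measurable (fun ω => ∑ r ∈ range k, B r ω) := fun k =>
    Finset.measurable_sum _ fun r _ => hBmeas r
  have hdisj : Pairwise (Function.onFun Disjoint
      (fun k => ({ω | N ω = k} ∩ {ω | ∑ r ∈ range k, B r ω = n}))) := by
    intro k l hkl
    refine Set.disjoint_left.mpr fun ω h1 h2 => hkl ?_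
    rw [← h1.1, ← h2.1]
  rw [hev, measure_iUnion hdisj (fun k => (meas_fiber hN k).inter (meas_fiber (hSmeas k) n))]
  have hterm : ∀ k, P ({ω | N ω = k} ∩ {ω | ∑ r ∈ range k, B r ω = n})
      = ENNReal.ofReal (Real.exp (-μ) * μ ^ k / k.factorial *
          (k.choose n * b ^ n * (1 - b) ^ (k - n))) := by
    intro k
    rw [indep_fiber (hNB k), hNpois k,
      sum_bernoulli_binomial B hBmeas hB1 hBind b hb0 hb1 hBb k n,
      ← ENNReal.ofReal_mul (by positivity)]
  calc ∑' k, P ({ω | N ω = k} ∩ {ω | ∑ r ∈ range k, B r ω = n})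
      = ∑' k, ENNReal.ofReal (Real.exp (-μ) * μ ^ k / k.factorial *
          (k.choose n * b ^ n * (1 - b) ^ (k - n))) := tsum_congr hterm
    _ = ENNReal.ofReal (∑' k, Real.exp (-μ) * μ ^ k / k.factorial *
          (k.choose n * b ^ n * (1 - b) ^ (k - n))) := by
        rw [ENNReal.ofReal_tsum_of_nonneg (fun k => by
          have := hb'
          have : (0:ℝ) ≤ (k.choose n : ℝ) * b ^ n * (1 - b) ^ (k - n) :=
            mul_nonneg (mul_nonneg (Nat.cast_nonneg _) (pow_nonneg hb0 _)) (pow_nonneg hb' _)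
          positivity) (poisson_binomial_summable μ b n)]
    _ = ENNReal.ofReal (Real.exp (-(μ * b)) * (μ * b) ^ n / n.factorial) := by
        rw [poisson_binomial_tsum]

lemma indep_poisson_add (A B : Ω → ℕ) (hA : Measurable A) (hB : Measurable B)
    (h : IndepFun A B P) (a b : ℝ) (ha : 0 ≤ a) (hb : 0 ≤ b)
    (hApois : ∀ n, P {ω | A ω = n}
      = ENNReal.ofReal (Real.exp (-a) * a ^ n / n.factorial))
    (hBpois : ∀ n, P {ω | B ω = n}
      = ENNReal.ofReal (Real.exp (-b) * b ^ n / n.factorial)) :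
    ∀ n, P {ω | A ω + B ω = n}
      = ENNReal.ofReal (Real.exp (-(a + b)) * (a + b) ^ n / n.factorial) := by
  intro n
  have hev : {ω | A ω + B ω = n}
      = ⋃ k ∈ range (n+1), ({ω | A ω = k} ∩ {ω | B ω = n - k}) := by
    ext ω
    simp only [Set.mem_setOf_eq, Set.mem_iUnion, Set.mem_inter_iff, Finset.mem_range]
    constructor
    · intro h'; exact ⟨A ω, by omega, rfl, by omega⟩
    · rintro ⟨k, hk, h1, h2⟩; omega
  have hdisj : (range (n+1) : Set ℕ).Pairwise (Function.onFun Disjoint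
      (fun k => ({ω | A ω = k} ∩ {ω | B ω = n - k}))) := by
    intro k _ l _ hkl
    refine Set.disjoint_left.mpr fun ω h1 h2 => hkl ?_
    rw [← h1.1, ← h2.1]
  rw [hev, measure_biUnion_finset hdisj
    (fun k _ => (meas_fiber hA k).inter (meas_fiber hB (n - k)))]
  have hterm : ∀ k, P ({ω | A ω = k} ∩ {ω | B ω = n - k})
      = ENNReal.ofReal ((Real.exp (-a) * a ^ k / k.factorial) *
          (Real.exp (-b) * b ^ (n - k) / (n - k).factorial)) := by
    intro k
    rw [indep_fiber h, hApois, hBpois, ← ENNReal.ofReal_mul (by positivity)]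
  rw [Finset.sum_congr rfl (fun k _ => hterm k),
    ← ENNReal.ofReal_sum_of_nonneg (fun k _ => by positivity)]
  congr 1
  have hexp : Real.exp (-a) * Real.exp (-b) = Real.exp (-(a + b)) := by
    rw [← Real.exp_add]; ring_nf
  rw [add_pow, Finset.mul_sum, Finset.sum_div]
  refine Finset.sum_congr rfl fun k hk => ?_
  have hk' := Nat.lt_succ_iff.mp (Finset.mem_range.mp hk)
  have hfac : (n.choose k : ℝ) * k.factorial * (n - k).factorial = n.factorial := by
    exact_mod_cast congrArg (Nat.cast (R := ℝ)) (Nat.choose_mul_factorial_mul_factorial hk')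
  have hkf : (k.factorial : ℝ) ≠ 0 := Nat.cast_ne_zero.mpr k.factorial_ne_zero
  have hnkf : ((n - k).factorial : ℝ) ≠ 0 := Nat.cast_ne_zero.mpr (n - k).factorial_ne_zero
  have hnf : (n.factorial : ℝ) ≠ 0 := Nat.cast_ne_zero.mpr n.factorial_ne_zero
  field_simp
  rw [← hexp, ← hfac]
  ring

lemma sum_indep_poisson {ι : Type*} [DecidableEq ι]
    (f : ι → Ω → ℕ) (hmeas : ∀ i, Measurable (f i))
    (hind : iIndepFun f P) (c : ι → ℝ) (s : Finset ι)
    (hc : ∀ i ∈ s, 0 ≤ c i)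
    (hpois : ∀ i ∈ s, ∀ n, P {ω | f i ω = n}
      = ENNReal.ofReal (Real.exp (-c i) * c i ^ n / n.factorial)) :
    ∀ n, P {ω | ∑ i ∈ s, f i ω = n}
      = ENNReal.ofReal (Real.exp (-(∑ i ∈ s, c i)) * (∑ i ∈ s, c i) ^ n / n.factorial) := by
  induction s using Finset.cons_induction with
  | empty =>
      intro n
      cases n with
      | zero => simp
      | succ m => simp [Set.setOf_false]
  | cons i s his ih =>
      have hcs : ∀ j ∈ s, 0 ≤ c j := fun j hj => hc j (Finset.mem_cons_of_mem hj)
      have hps : ∀ j ∈ s, ∀ n, P {ω | f j ω = n}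
          = ENNReal.ofReal (Real.exp (-c j) * c j ^ n / n.factorial) :=
        fun j hj => hpois j (Finset.mem_cons_of_mem hj)
      have hSmeas : Measurable (fun ω => ∑ j ∈ s, f j ω) :=
        Finset.measurable_sum _ fun j _ => hmeas j
      have hindAB : IndepFun (f i) (fun ω => ∑ j ∈ s, f j ω) P := by
        have := (hind.indepFun_finsetSum_of_notMem hmeas his).symm
        have he : (∑ j ∈ s, f j) = fun ω => ∑ j ∈ s, f j ω := by funext ω; simp
        rwa [he] at this
      have h0 : (0:ℝ) ≤ ∑ j ∈ s, c j := Finset.sum_nonneg hcs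
      intro n
      have := indep_poisson_add (f i) (fun ω => ∑ j ∈ s, f j ω) (hmeas i) hSmeas hindAB
        (c i) (∑ j ∈ s, c j) (hc i (Finset.mem_cons_self i s)) h0
        (hpois i (Finset.mem_cons_self i s)) (ih hcs hps) n
      have he2 : {ω | ∑ j ∈ Finset.cons i s his, f j ω = n}
          = {ω | f i ω + ∑ j ∈ s, f j ω = n} := by
        ext ω; simp only [Set.mem_setOf_eq, Finset.sum_cons]
      rw [he2, this, Finset.sum_cons]

lemma iIndepFun_comp_of_injective {ι κ β : Type*} {m : MeasurableSpace β}
    {f : ι → Ω → β} (h : iIndepFun f P) {g : κ → ι}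
    (hg : Function.Injective g) :
    iIndepFun (fun k => f (g k)) P := by
  classical
  rw [iIndepFun_iff_measure_inter_preimage_eq_mul] at h ⊢
  intro S sets hsets
  set sets' : ι → Set β := fun i => ⋂ k ∈ S.filter (fun k => g k = i), sets k with hsets'def
  have hkey : ∀ k ∈ S, sets' (g k) = sets k := by
    intro k hk
    have : S.filter (fun k' => g k' = g k) = {k} := by
      ext k'
      simp only [Finset.mem_filter, Finset.mem_singleton]
      exact ⟨fun ⟨_, h'⟩ => hg h', fun h' => by subst h'; exact ⟨hk, rfl⟩⟩
    ext x
    rw [hsets'def]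
    simp only [this, Set.mem_iInter, Finset.mem_singleton]
    exact ⟨fun h => h k rfl, fun hx k' h' => by subst h'; exact hx⟩
  have hmeas' : ∀ i ∈ S.image g, MeasurableSet[m] (sets' i) := by
    intro i _
    exact Finset.measurableSet_biInter _
      (fun k hk => hsets k (Finset.mem_filter.mp hk).1)
  have h1 := h (S.image g) hmeas'
  have hinter : (⋂ i ∈ S.image g, f i ⁻¹' sets' i) = ⋂ k ∈ S, f (g k) ⁻¹' sets k := by
    ext x
    simp only [Set.mem_iInter, Finset.mem_image]
    constructor
    · intro h k hk
      have := h (g k) ⟨k, hk, rfl⟩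
      rwa [hkey k hk] at this
    · rintro h i ⟨k, hk, rfl⟩
      rw [hkey k hk]
      exact h k hk
  have hprod : ∏ i ∈ S.image g, P (f i ⁻¹' sets' i) = ∏ k ∈ S, P (f (g k) ⁻¹' sets k) := by
    rw [Finset.prod_image (fun a _ b _ hab => hg hab)]
    exact Finset.prod_congr rfl fun k hk => by rw [hkey k hk]
  rw [hinter, hprod] at h1
  exact h1

lemma iIndep_pair_bundle {ι A B : Type*} [MeasurableSpace A] [MeasurableSpace B]
    (f : ι → Ω → A) (g : ι × ℕ → Ω → B)
    (hf : ∀ i, Measurable (f i)) (hg : ∀ ik, Measurable (g ik))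
    (hfi : iIndepFun f P)
    (hgi : iIndepFun g P)
    (hfg : IndepFun (fun ω i => f i ω) (fun ω ik => g ik ω) P) :
    iIndepFun (fun i ω => ((f i ω, fun k => g (i, k) ω) : A × (ℕ → B))) P := by
  classical
  set W : ι → Ω → A × (ℕ → B) := fun i ω => (f i ω, fun k => g (i, k) ω) with hWdef
  have hWmeas : ∀ i, Measurable (W i) :=
    fun i => Measurable.prodMk (hf i) (measurable_pi_lambda _ (fun k => hg (i, k)))
  set π : ι → Set (Set Ω) := fun i =>
    {u | ∃ (Ai : Set A) (ni : ℕ) (Bi : ℕ → Set B), MeasurableSet Ai ∧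
      (∀ k, MeasurableSet (Bi k)) ∧
      u = f i ⁻¹' Ai ∩ ⋂ k ∈ range ni, g (i, k) ⁻¹' Bi k} with hπdef
  have hpi : ∀ i, IsPiSystem (π i) := by
    rintro i u ⟨Au, nu, Bu, hAu, hBu, rfl⟩ v ⟨Av, nv, Bv, hAv, hBv, rfl⟩ _
    refine ⟨Au ∩ Av, max nu nv,
      fun k => (if k < nu then Bu k else Set.univ) ∩ (if k < nv then Bv k else Set.univ),
      hAu.inter hAv, fun k => MeasurableSet.inter
        (by show MeasurableSet (if k < nu then Bu k else Set.univ)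
            split_ifs; exacts [hBu k, .univ])
        (by show MeasurableSet (if k < nv then Bv k else Set.univ)
            split_ifs; exacts [hBv k, .univ]), ?_⟩
    ext ω
    simp only [Set.mem_inter_iff, Set.mem_preimage, Set.mem_iInter, Finset.mem_range,
      Set.mem_ite_univ_right]
    constructor
    · rintro ⟨⟨h1, h2⟩, ⟨h3, h4⟩⟩
      exact ⟨⟨h1, h3⟩, fun k _ => ⟨fun hk => h2 k hk, fun hk => h4 k hk⟩⟩
    · rintro ⟨⟨h1, h3⟩, h⟩
      exact ⟨⟨h1, fun k hk => (h k (lt_of_lt_of_le hk (le_max_left _ _))).1 hk⟩,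
        ⟨h3, fun k hk => (h k (lt_of_lt_of_le hk (le_max_right _ _))).2 hk⟩⟩
  have hcomap : ∀ i, MeasurableSpace.comap (W i) inferInstance
      = MeasurableSpace.comap (f i) inferInstance
        ⊔ ⨆ k : ℕ, MeasurableSpace.comap (g (i, k)) inferInstance := by
    intro i
    have h1 : (inferInstance : MeasurableSpace (A × (ℕ → B)))
        = MeasurableSpace.comap Prod.fst inferInstance
          ⊔ MeasurableSpace.comap Prod.snd
            (⨆ k : ℕ, MeasurableSpace.comap (fun b => b k) inferInstance) := rfl
    rw [h1]
    simp only [MeasurableSpace.comap_sup, MeasurableSpace.comap_iSup,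
      MeasurableSpace.comap_comp]
    rfl
  have hgen : ∀ i, MeasurableSpace.comap (W i) inferInstance
      = MeasurableSpace.generateFrom (π i) := by
    intro i
    apply le_antisymm
    · rw [hcomap i]
      refine sup_le ?_ (iSup_le fun k => ?_)
      · rintro u ⟨Ai, hAi, rfl⟩
        refine MeasurableSpace.measurableSet_generateFrom
          ⟨Ai, 0, fun _ => Set.univ, hAi, fun _ => .univ, ?_⟩
        simp
      · rintro u ⟨Bk, hBk, rfl⟩
        refine MeasurableSpace.measurableSet_generateFrom
          ⟨Set.univ, k + 1, fun j => if j = k then Bk else Set.univ, .univ,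
            fun j => by show MeasurableSet (if j = k then Bk else Set.univ)
                        split_ifs; exacts [hBk, .univ], ?_⟩
        ext ω
        simp only [Set.mem_preimage, Set.univ_inter, Set.mem_inter_iff, Set.mem_iInter,
          Finset.mem_range, Set.mem_univ, true_and]
        constructor
        · intro h j hj
          split_ifs with hjk
          · subst hjk; exact h
          · trivial
        · intro h
          have := h k (Nat.lt_succ_self k)
          simpa using this
    · refine MeasurableSpace.generateFrom_le ?_
      rintro u ⟨Ai, ni, Bi, hAi, hBi, rfl⟩
      refine ⟨Ai ×ˢ (⋂ k ∈ range ni, Function.eval k ⁻¹' Bi k),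
        hAi.prod (Finset.measurableSet_biInter _
          (fun k _ => measurable_pi_apply k (hBi k))), ?_⟩
      ext ω
      simp only [Set.mem_preimage, Set.mem_prod, Set.mem_iInter, Finset.mem_range,
        Set.mem_inter_iff, hWdef, Function.eval]
  have h_le : ∀ i, MeasurableSpace.comap (W i) inferInstance ≤ _ := fun i => (hWmeas i).comap_le
  have hindsets : iIndepSets π P := by
    rw [iIndepSets_iff]
    intro S sets hsets
    choose Af nf Bf hAf hBf hrep using hsets
    set A' : ι → Set A := fun i => if h : i ∈ S then Af i h else Set.univ with hA'def
    set n' : ι → ℕ := fun i => if h : i ∈ S then nf i h else 0 with hn'def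
    set B' : ι × ℕ → Set B := fun ik => if h : ik.1 ∈ S then Bf ik.1 h ik.2 else Set.univ
      with hB'def
    have hA' : ∀ i, MeasurableSet (A' i) := by
      intro i; rw [hA'def]; dsimp only; split_ifs with h; exacts [hAf i h, .univ]
    have hB' : ∀ ik, MeasurableSet (B' ik) := by
      intro ik; rw [hB'def]; dsimp only; split_ifs with h; exacts [hBf ik.1 h ik.2, .univ]
    have hrep' : ∀ i (h : i ∈ S), sets i
        = f i ⁻¹' A' i ∩ ⋂ k ∈ range (n' i), g (i, k) ⁻¹' B' (i, k) := by
      intro i h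
      rw [hA'def, hn'def, hB'def]
      simp only [dif_pos h]
      exact hrep i h
    -- the key product formula, for any T ⊆ S
    have hblock : ∀ T : Finset ι, T ⊆ S → P (⋂ i ∈ T, sets i)
        = (∏ i ∈ T, P (f i ⁻¹' A' i))
          * ∏ i ∈ T, ∏ k ∈ range (n' i), P (g (i, k) ⁻¹' B' (i, k)) := by
      intro T hTS
      have hsplit : (⋂ i ∈ T, sets i)
          = (⋂ i ∈ T, f i ⁻¹' A' i)
            ∩ (⋂ i ∈ T, ⋂ k ∈ range (n' i), g (i, k) ⁻¹' B' (i, k)) := by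
        ext ω
        simp only [Set.mem_iInter, Set.mem_inter_iff]
        constructor
        · intro h
          constructor <;> intro i hi <;>
            · have hh := h i hi
              rw [hrep' i (hTS hi)] at hh
              first
                | exact hh.1
                | simpa using hh.2
        · rintro ⟨h1, h2⟩ i hi
          rw [hrep' i (hTS hi)]
          exact ⟨h1 i hi, by simpa using h2 i hi⟩
      have hFpre : (fun ω (i : ι) => f i ω) ⁻¹' (⋂ i ∈ T, (fun z : ι → A => z i) ⁻¹' A' i)
          = ⋂ i ∈ T, f i ⁻¹' A' i := by
        simp only [Set.preimage_iInter₂]; rfl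
      have hGpre : (fun ω (ik : ι × ℕ) => g ik ω) ⁻¹'
            (⋂ i ∈ T, ⋂ k ∈ range (n' i), (fun z : ι × ℕ → B => z (i, k)) ⁻¹' B' (i, k))
          = ⋂ i ∈ T, ⋂ k ∈ range (n' i), g (i, k) ⁻¹' B' (i, k) := by
        simp only [Set.preimage_iInter₂]; rfl
      have hAmeas : MeasurableSet (⋂ i ∈ T, (fun z : ι → A => z i) ⁻¹' A' i) :=
        Finset.measurableSet_biInter _ (fun i _ => measurable_pi_apply i (hA' i))
      have hBmeas : MeasurableSet
          (⋂ i ∈ T, ⋂ k ∈ range (n' i), (fun z : ι × ℕ → B => z (i, k)) ⁻¹' B' (i, k)) :=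
        Finset.measurableSet_biInter _ (fun i _ =>
          Finset.measurableSet_biInter _
            (fun k _ => measurable_pi_apply (i, k) (hB' (i, k))))
      have hstep1 : P (⋂ i ∈ T, sets i)
          = P (⋂ i ∈ T, f i ⁻¹' A' i)
            * P (⋂ i ∈ T, ⋂ k ∈ range (n' i), g (i, k) ⁻¹' B' (i, k)) := by
        rw [hsplit, ← hFpre, ← hGpre]
        exact hfg.measure_inter_preimage_eq_mul _ _ hAmeas hBmeas
      have hstep2 : P (⋂ i ∈ T, f i ⁻¹' A' i) = ∏ i ∈ T, P (f i ⁻¹' A' i) :=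
        hfi.measure_inter_preimage_eq_mul T (fun i _ => hA' i)
      -- flatten the double intersection over pairs
      set Tp : Finset (ι × ℕ) := T.biUnion (fun i => (range (n' i)).image (fun k => (i, k)))
        with hTpdef
      have hflat : (⋂ i ∈ T, ⋂ k ∈ range (n' i), g (i, k) ⁻¹' B' (i, k))
          = ⋂ q ∈ Tp, g q ⁻¹' B' q := by
        ext ω
        simp only [Set.mem_iInter, hTpdef, Finset.mem_biUnion, Finset.mem_image,
          Finset.mem_range]
        constructor
        · rintro h q ⟨i, hi, k, hk, rfl⟩
          exact h i hi k hk
        · intro h i hi k hk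
          exact h (i, k) ⟨i, hi, k, hk, rfl⟩
      have hstep3 : P (⋂ q ∈ Tp, g q ⁻¹' B' q) = ∏ q ∈ Tp, P (g q ⁻¹' B' q) :=
        hgi.measure_inter_preimage_eq_mul Tp (fun q _ => hB' q)
      have hstep4 : ∏ q ∈ Tp, P (g q ⁻¹' B' q)
          = ∏ i ∈ T, ∏ k ∈ range (n' i), P (g (i, k) ⁻¹' B' (i, k)) := by
        rw [hTpdef, Finset.prod_biUnion ?hd]
        · refine Finset.prod_congr rfl fun i _ => ?_
          rw [Finset.prod_image (fun a _ b _ hab => by injection hab)]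
        · intro x hx y hy hxy
          refine Finset.disjoint_left.mpr fun q hqx hqy => hxy ?_
          obtain ⟨k1, _, rfl⟩ := Finset.mem_image.mp hqx
          obtain ⟨k2, _, h2⟩ := Finset.mem_image.mp hqy
          exact (congrArg Prod.fst h2).symm
      rw [hstep1, hstep2, hflat, hstep3, hstep4]
    have hS := hblock S le_rfl
    have hsingle : ∀ i ∈ S, P (sets i)
        = P (f i ⁻¹' A' i) * ∏ k ∈ range (n' i), P (g (i, k) ⁻¹' B' (i, k)) := by
      intro i hi
      have := hblock {i} (Finset.singleton_subset_iff.mpr hi)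
      simpa using this
    rw [hS, Finset.prod_congr rfl hsingle, Finset.prod_mul_distrib]
  have := iIndepSets.iIndep (m := fun i => MeasurableSpace.comap (W i) inferInstance)
    h_le π hpi hgen hindsets
  rw [iIndepFun_iff_iIndep]
  exact this

end Aux

/-- Poisson INMA(q1,q2): the observations are Poisson(μ_ε β_•) distributed. -/
theorem poisson_inma_marginal
    {Ω : Type*} [MeasurableSpace Ω] (P : Measure Ω) [IsProbabilityMeasure P]
    (q1 q2 : ℕ) (hq : 1 ≤ q1 + q2)
    (β : ℕ → ℕ → ℝ)
    (hβ : ∀ i ≤ q1, ∀ j ≤ q2, β i j ∈ Set.Icc (0 : ℝ) 1)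
    -- the i.i.d. Poisson(με) innovations
    (ε : ℤ × ℤ → Ω → ℕ) (hεmeas : ∀ p, Measurable (ε p))
    (hεiid : iIndepFun ε P)
    (με : ℝ) (hμε : 0 < με)
    (hεPoi : ∀ p n, P {ω | ε p ω = n} =
      ENNReal.ofReal (Real.exp (-με) * με ^ n / n.factorial))
    -- the counting-series vectors, i.i.d., with {0,1}-valued components
    (Z : ℤ × ℤ → ℕ → Ω → ℕ × ℕ → ℕ)
    (hZmeas : ∀ p r, Measurable (Z p r))
    (hZ01 : ∀ p r ω ij, Z p r ω ij ≤ 1)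
    (hZiid : iIndepFun (fun pr : (ℤ × ℤ) × ℕ => Z pr.1 pr.2) P)
    (hZid : ∀ p r, Measure.map (Z p r) P = Measure.map (Z (0, 0) 0) P)
    (hZβ : ∀ p r, ∀ i ≤ q1, ∀ j ≤ q2,
      P {ω | Z p r ω (i, j) = 1} = ENNReal.ofReal (β i j))
    -- the whole thinning family is independent of the innovation family
    (hindep : IndepFun (fun ω p => ε p ω)
      (fun ω (pr : (ℤ × ℤ) × ℕ) => Z pr.1 pr.2 ω) P)
    -- the INMA(q1,q2) random field
    (X : ℤ → ℤ → Ω → ℕ)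
    (hX : ∀ s t ω, X s t ω =
      ∑ i ∈ range (q1 + 1), ∑ j ∈ range (q2 + 1),
        ∑ r ∈ range (ε (s - (i : ℤ), t - (j : ℤ)) ω),
          Z (s - (i : ℤ), t - (j : ℤ)) r ω (i, j))
    (s t : ℤ) :
    (∀ n : ℕ, P {ω | X s t ω = n} =
      ENNReal.ofReal (Real.exp (-(με * ∑ i ∈ range (q1 + 1), ∑ j ∈ range (q2 + 1), β i j))
        * (με * ∑ i ∈ range (q1 + 1), ∑ j ∈ range (q2 + 1), β i j) ^ n / n.factorial)) ∧
    (∀ u ∈ Set.Icc (0 : ℝ) 1,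
      ∫ ω, u ^ X s t ω ∂P =
        Real.exp (με * (∑ i ∈ range (q1 + 1), ∑ j ∈ range (q2 + 1), β i j) * (u - 1))) := by
  classical
  set βs : ℝ := ∑ i ∈ range (q1 + 1), ∑ j ∈ range (q2 + 1), β i j with hβs
  have hβs0 : 0 ≤ βs := by
    rw [hβs]
    refine Finset.sum_nonneg fun i hi => Finset.sum_nonneg fun j hj => ?_
    exact (hβ i (Nat.lt_succ_iff.mp (mem_range.mp hi)) j
      (Nat.lt_succ_iff.mp (mem_range.mp hj))).1
  set J : Finset (ℕ × ℕ) := range (q1 + 1) ×ˢ range (q2 + 1) with hJ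
  set pm : ℕ × ℕ → ℤ × ℤ := fun ij => (s - (ij.1 : ℤ), t - (ij.2 : ℤ)) with hpm
  have hpminj : Function.Injective pm := by
    intro a b hab
    rw [hpm] at hab
    simp only [Prod.mk.injEq] at hab
    have h1 : (a.1 : ℤ) = b.1 := by linarith [hab.1]
    have h2 : (a.2 : ℤ) = b.2 := by linarith [hab.2]
    exact Prod.ext (Nat.cast_injective h1) (Nat.cast_injective h2)
  set Y : ℕ × ℕ → Ω → ℕ := fun ij ω => ∑ r ∈ range (ε (pm ij) ω), Z (pm ij) r ω ij with hY
  have hXeq : ∀ ω, X s t ω = ∑ ij ∈ J, Y ij ω := by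
    intro ω
    rw [hX s t ω, hJ, Finset.sum_product]
  -- measurability of each Y ij
  have hWmeas : ∀ p : ℤ × ℤ, Measurable (fun ω => ((ε p ω, fun r => Z p r ω) :
      ℕ × (ℕ → ℕ × ℕ → ℕ))) := fun p =>
    (hεmeas p).prodMk (measurable_pi_lambda _ fun r => hZmeas p r)
  set φ : ℕ × ℕ → (ℕ × (ℕ → ℕ × ℕ → ℕ)) → ℕ :=
    fun ij x => ∑ r ∈ range x.1, x.2 r ij with hφ
  have hφmeas : ∀ ij, Measurable (φ ij) := by
    intro ij
    apply measurable_to_countable'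
    intro n
    have hev : (φ ij) ⁻¹' {n} = ⋃ k : ℕ, ({x : ℕ × (ℕ → ℕ × ℕ → ℕ) | x.1 = k}
        ∩ {x | ∑ r ∈ range k, x.2 r ij = n}) := by
      ext x
      simp only [Set.mem_preimage, Set.mem_singleton_iff, Set.mem_iUnion, Set.mem_inter_iff,
        Set.mem_setOf_eq, hφ]
      exact ⟨fun h => ⟨x.1, rfl, h⟩, fun ⟨k, hk, h⟩ => by rw [hk]; exact h⟩
    rw [hev]
    refine MeasurableSet.iUnion fun k => MeasurableSet.inter ?_ ?_
    · exact measurable_fst (measurableSet_singleton k)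
    · have hm : Measurable (fun x : ℕ × (ℕ → ℕ × ℕ → ℕ) => ∑ r ∈ range k, x.2 r ij) :=
        Finset.measurable_sum _ fun r _ =>
          (measurable_pi_apply ij).comp ((measurable_pi_apply r).comp measurable_snd)
      exact hm (measurableSet_singleton n)
  have hYmeas : ∀ ij, Measurable (Y ij) := fun ij => (hφmeas ij).comp (hWmeas (pm ij))
  -- joint independence of the Y family
  have hWindep := iIndep_pair_bundle ε (fun pr : (ℤ × ℤ) × ℕ => Z pr.1 pr.2) hεmeas
    (fun pr => hZmeas pr.1 pr.2) hεiid hZiid hindep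
  have hWre := iIndepFun_comp_of_injective hWindep hpminj
  have hYindep : iIndepFun Y P := by
    have := hWre.comp φ hφmeas
    exact this
  -- marginals
  have hYpois : ∀ ij ∈ J, ∀ n, P {ω | Y ij ω = n}
      = ENNReal.ofReal (Real.exp (-(με * β ij.1 ij.2)) * (με * β ij.1 ij.2) ^ n
          / n.factorial) := by
    intro ij hij
    have hij' : ij.1 ≤ q1 ∧ ij.2 ≤ q2 := by
      rw [hJ] at hij
      rcases Finset.mem_product.mp hij with ⟨h1, h2⟩
      exact ⟨Nat.lt_succ_iff.mp (mem_range.mp h1), Nat.lt_succ_iff.mp (mem_range.mp h2)⟩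
    have hβij := hβ ij.1 hij'.1 ij.2 hij'.2
    have hBind : iIndepFun (fun r (ω : Ω) => Z (pm ij) r ω ij) P := by
      have h1 : Function.Injective (fun r : ℕ => ((pm ij, r) : (ℤ × ℤ) × ℕ)) :=
        fun a b hab => by injection hab
      have h2 := iIndepFun_comp_of_injective hZiid h1
      exact h2.comp (fun r (v : ℕ × ℕ → ℕ) => v ij) (fun r => measurable_pi_apply ij)
    have hBb : ∀ r, P {ω | Z (pm ij) r ω ij = 1} = ENNReal.ofReal (β ij.1 ij.2) := by
      intro r
      have := hZβ (pm ij) r ij.1 hij'.1 ij.2 hij'.2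
      simpa using this
    have hNB : ∀ k : ℕ, IndepFun (ε (pm ij))
        (fun ω => ∑ r ∈ range k, Z (pm ij) r ω ij) P := by
      intro k
      exact hindep.comp (measurable_pi_apply (pm ij))
        (Finset.measurable_sum _ fun r _ =>
          (measurable_pi_apply ij).comp (measurable_pi_apply ((pm ij, r))))
    exact thinning_poisson (ε (pm ij)) (hεmeas _) (fun r ω => Z (pm ij) r ω ij)
      (fun r => (measurable_pi_apply ij).comp (hZmeas _ r))
      (fun r ω => hZ01 _ r ω ij) hBind με (β ij.1 ij.2) hμε.le hβij.1 hβij.2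
      (hεPoi _) hBb hNB
  have hcsum : ∑ ij ∈ J, με * β ij.1 ij.2 = με * βs := by
    rw [hβs, hJ, Finset.sum_product, Finset.mul_sum]
    exact Finset.sum_congr rfl fun i _ => by rw [Finset.mul_sum]
  have part1 : ∀ n : ℕ, P {ω | X s t ω = n}
      = ENNReal.ofReal (Real.exp (-(με * βs)) * (με * βs) ^ n / n.factorial) := by
    intro n
    have hsum := sum_indep_poisson Y hYmeas hYindep (fun ij => με * β ij.1 ij.2) J
      (fun ij hij => mul_nonneg hμε.le (hβ ij.1 (by
        rcases Finset.mem_product.mp (hJ ▸ hij) with ⟨h1, _⟩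
        exact Nat.lt_succ_iff.mp (mem_range.mp h1)) ij.2 (by
        rcases Finset.mem_product.mp (hJ ▸ hij) with ⟨_, h2⟩
        exact Nat.lt_succ_iff.mp (mem_range.mp h2))).1)
      hYpois n
    rw [hcsum] at hsum
    have hset : {ω | X s t ω = n} = {ω | ∑ ij ∈ J, Y ij ω = n} := by
      ext ω; rw [Set.mem_setOf_eq, Set.mem_setOf_eq, hXeq ω]
    rw [hset]
    exact hsum
  have hlam0 : 0 ≤ με * βs := mul_nonneg hμε.le hβs0
  refine ⟨part1, ?_⟩
  intro u hu
  obtain ⟨hu0, hu1⟩ := hu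
  have hXmeas : Measurable (X s t) := by
    have hfe : X s t = fun ω => ∑ ij ∈ J, Y ij ω := funext hXeq
    rw [hfe]
    exact Finset.measurable_sum _ fun ij _ => hYmeas ij
  have hg : AEStronglyMeasurable (fun n : ℕ => u ^ n) (P.map (X s t)) :=
    (measurable_from_top (f := fun n : ℕ => u ^ n)).aestronglyMeasurable
  have hprob : IsProbabilityMeasure (P.map (X s t)) :=
    Measure.isProbabilityMeasure_map hXmeas.aemeasurable
  have hint : Integrable (fun n : ℕ => u ^ n) (P.map (X s t)) := by
    refine Integrable.mono' (integrable_const 1) hg ?_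
    filter_upwards with n
    rw [Real.norm_eq_abs, abs_of_nonneg (pow_nonneg hu0 n)]
    exact pow_le_one₀ hu0 hu1
  have h1 : ∫ ω, u ^ X s t ω ∂P = ∫ n, (fun n : ℕ => u ^ n) n ∂(P.map (X s t)) :=
    (integral_map hXmeas.aemeasurable hg).symm
  have hmap : ∀ n : ℕ, (P.map (X s t)) {n} = P {ω | X s t ω = n} := by
    intro n
    rw [Measure.map_apply hXmeas (measurableSet_singleton n)]
    rfl
  have hterm : ∀ n : ℕ, (P.map (X s t)).real {n} • u ^ n
      = Real.exp (-(με * βs)) * ((με * βs * u) ^ n / n.factorial) := by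
    intro n
    rw [measureReal_def, hmap n, part1 n, ENNReal.toReal_ofReal (by positivity), smul_eq_mul, mul_pow]
    field_simp
    ring
  rw [h1, integral_countable' hint, tsum_congr hterm, tsum_mul_left]
  have hexp : (∑' n : ℕ, (με * βs * u) ^ n / n.factorial) = Real.exp (με * βs * u) := by
    rw [Real.exp_eq_exp_ℝ, NormedSpace.exp_eq_tsum_div]
  rw [hexp, ← Real.exp_add]
  congr 1
  ring
end
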